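/- arXiv:1706.06930 — 9 statements merged into one kernel-verified Lean document; each statement's English description precedes it below -/
import Mathlib

section
/- With 𝓡 the block matrix built from R as in the noncommutative product construction (𝓡^{λμ}_{τρ} = δ^λ_ρ δ^μ_τ, 𝓡^{γδ}_{αβ} = δ^γ_β δ^δ_α, 𝓡^{λα}_{βμ} = R^{λα}_{βμ}, 𝓡^{αλ}_{μβ} = R̄^{λα}_{βμ}, other mixed components zero), the Yang–Baxter equation (𝓡⊗1)(1⊗𝓡)(𝓡⊗1) = (1⊗𝓡)(𝓡⊗1)(1⊗𝓡) on (ℂ^{N₁+N₂})^{⊗3} holds if and only if the following six families of component equations hold for all admissible indices: (1) Σ_ρ R^{λα}_{γρ} R^{ρβ}_{δμ} = Σ_ρ R^{λβ}_{δρ} R^{ρα}_{γμ}; (2) the same with R replaced by R̄; (3) Σ_ρ R̄^{λα}_{γρ} R^{ρβ}_{δμ} = Σ_ρ R^{λβ}_{δρ} R̄^{ρα}_{γμ}; (4) Σ_γ R^{λα}_{γν} R^{μγ}_{βρ} = Σ_γ R^{μα}_{γρ} R^{λγ}_{βν}; (5) the same with R replaced by R̄; (6) Σ_γ R^{λα}_{γν}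 R̄^{μγ}_{βρ} = Σ_γ R̄^{μα}_{γρ} R^{λγ}_{βν}. -/
open Complex

/-- The block matrix 𝓡 built from `R`. Combined indices are modelled by `Fin N₁ ⊕ Fin N₂`. -/
noncomputable def bigR {N1 N2 : ℕ} (R : Fin N1 → Fin N2 → Fin N2 → Fin N1 → ℂ) :
    Matrix ((Fin N1 ⊕ Fin N2) × (Fin N1 ⊕ Fin N2)) ((Fin N1 ⊕ Fin N2) × (Fin N1 ⊕ Fin N2)) ℂ :=
  fun p q =>
    match p, q with
    | (Sum.inl l, Sum.inl m), (Sum.inl t, Sum.inl r) =>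
        (if l = r then 1 else 0) * (if m = t then 1 else 0)
    | (Sum.inr g, Sum.inr d), (Sum.inr a, Sum.inr b) =>
        (if g = b then 1 else 0) * (if d = a then 1 else 0)
    | (Sum.inl l, Sum.inr a), (Sum.inr b, Sum.inl m) => R l a b m
    | (Sum.inr a, Sum.inl l), (Sum.inl m, Sum.inr b) => (starRingEnd ℂ) (R l a b m)
    | _, _ => 0

/-- `M ⊗ 1` acting on the first two of three tensor factors. -/
def op12 {X : Type*} [DecidableEq X] (M : Matrix (X × X) (X × X) ℂ) :
    Matrix (X × X × X) (X × X × X) ℂ :=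
  fun p q => M (p.1, p.2.1) (q.1, q.2.1) * (if p.2.2 = q.2.2 then 1 else 0)

/-- `1 ⊗ M` acting on the last two of three tensor factors. -/
def op23 {X : Type*} [DecidableEq X] (M : Matrix (X × X) (X × X) ℂ) :
    Matrix (X × X × X) (X × X × X) ℂ :=
  fun p q => (if p.1 = q.1 then 1 else 0) * M (p.2.1, p.2.2) (q.2.1, q.2.2)

private lemma sum_rot {X : Type*} [Fintype X] (f : X → X → X → ℂ) :
    ∑ a : X, ∑ b : X, ∑ c : X, f a b c = ∑ c : X, ∑ a : X, ∑ b : X, f a b c := by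
  calc ∑ a : X, ∑ b : X, ∑ c : X, f a b c
      = ∑ a : X, ∑ c : X, ∑ b : X, f a b c :=
        Finset.sum_congr rfl (fun a _ => Finset.sum_comm)
    _ = ∑ c : X, ∑ a : X, ∑ b : X, f a b c := Finset.sum_comm

private lemma lhs_apply {X : Type*} [DecidableEq X] [Fintype X] (M : Matrix (X × X) (X × X) ℂ)
    (p q : X × X × X) :
    (op12 M * op23 M * op12 M) p q =
      ∑ u1 : X, ∑ u2 : X, ∑ v2 : X,
        M (p.1, p.2.1) (u1, v2) * M (v2, p.2.2) (u2, q.2.2) * M (u1, u2) (q.1, q.2.1) := by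
  obtain ⟨p1, p2, p3⟩ := p
  obtain ⟨q1, q2, q3⟩ := q
  simp only [Matrix.mul_apply, op12, op23, Fintype.sum_prod_type]
  simp [Finset.mul_sum, Finset.sum_mul, mul_ite, ite_mul, mul_comm, mul_left_comm]

private lemma rhs_apply {X : Type*} [DecidableEq X] [Fintype X] (M : Matrix (X × X) (X × X) ℂ)
    (p q : X × X × X) :
    (op23 M * op12 M * op23 M) p q =
      ∑ v2 : X, ∑ u2 : X, ∑ u3 : X,
        M (p.2.1, p.2.2) (v2, u3) * M (p.1, v2) (q.1, u2) * M (u2, u3) (q.2.1, q.2.2) := by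
  obtain ⟨p1, p2, p3⟩ := p
  obtain ⟨q1, q2, q3⟩ := q
  simp only [Matrix.mul_apply, op12, op23, Fintype.sum_prod_type]
  simp [Finset.mul_sum, Finset.sum_mul, mul_ite, ite_mul, mul_comm, mul_left_comm]
  refine (sum_rot (f := fun x x1 x2 => M (p1, x2) (q1, x) * (M (x, x1) (q2, q3) * M (p2, p3) (x2, x1)))).trans ?_
  refine Finset.sum_congr rfl fun v2 _ => Finset.sum_congr rfl fun u2 _ =>
    Finset.sum_congr rfl fun u3 _ => ?_
  ring

@[simp] lemma bigR_llll {N1 N2 : ℕ} (R : Fin N1 → Fin N2 → Fin N2 → Fin N1 → ℂ) (x0 : Fin N1) (x1 : Fin N1) (x2 : Fin N1) (x3 : Fin N1) :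
    bigR R ((Sum.inl x0), (Sum.inl x1)) ((Sum.inl x2), (Sum.inl x3)) = (if x0 = x3 then 1 else 0) * (if x1 = x2 then 1 else 0) := rfl

@[simp] lemma bigR_lllr {N1 N2 : ℕ} (R : Fin N1 → Fin N2 → Fin N2 → Fin N1 → ℂ) (x0 : Fin N1) (x1 : Fin N1) (x2 : Fin N1) (x3 : Fin N2) :
    bigR R ((Sum.inl x0), (Sum.inl x1)) ((Sum.inl x2), (Sum.inr x3)) = 0 := rfl

@[simp] lemma bigR_llrl {N1 N2 : ℕ} (R : Fin N1 → Fin N2 → Fin N2 → Fin N1 → ℂ) (x0 : Fin N1) (x1 : Fin N1) (x2 : Fin N2) (x3 : Fin N1) :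
    bigR R ((Sum.inl x0), (Sum.inl x1)) ((Sum.inr x2), (Sum.inl x3)) = 0 := rfl

@[simp] lemma bigR_llrr {N1 N2 : ℕ} (R : Fin N1 → Fin N2 → Fin N2 → Fin N1 → ℂ) (x0 : Fin N1) (x1 : Fin N1) (x2 : Fin N2) (x3 : Fin N2) :
    bigR R ((Sum.inl x0), (Sum.inl x1)) ((Sum.inr x2), (Sum.inr x3)) = 0 := rfl

@[simp] lemma bigR_lrll {N1 N2 : ℕ} (R : Fin N1 → Fin N2 → Fin N2 → Fin N1 → ℂ) (x0 : Fin N1) (x1 : Fin N2) (x2 : Fin N1) (x3 : Fin N1) :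
    bigR R ((Sum.inl x0), (Sum.inr x1)) ((Sum.inl x2), (Sum.inl x3)) = 0 := rfl

@[simp] lemma bigR_lrlr {N1 N2 : ℕ} (R : Fin N1 → Fin N2 → Fin N2 → Fin N1 → ℂ) (x0 : Fin N1) (x1 : Fin N2) (x2 : Fin N1) (x3 : Fin N2) :
    bigR R ((Sum.inl x0), (Sum.inr x1)) ((Sum.inl x2), (Sum.inr x3)) = 0 := rfl

@[simp] lemma bigR_lrrl {N1 N2 : ℕ} (R : Fin N1 → Fin N2 → Fin N2 → Fin N1 → ℂ) (x0 : Fin N1) (x1 : Fin N2) (x2 : Fin N2) (x3 : Fin N1) :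
    bigR R ((Sum.inl x0), (Sum.inr x1)) ((Sum.inr x2), (Sum.inl x3)) = R x0 x1 x2 x3 := rfl

@[simp] lemma bigR_lrrr {N1 N2 : ℕ} (R : Fin N1 → Fin N2 → Fin N2 → Fin N1 → ℂ) (x0 : Fin N1) (x1 : Fin N2) (x2 : Fin N2) (x3 : Fin N2) :
    bigR R ((Sum.inl x0), (Sum.inr x1)) ((Sum.inr x2), (Sum.inr x3)) = 0 := rfl

@[simp] lemma bigR_rlll {N1 N2 : ℕ} (R : Fin N1 → Fin N2 → Fin N2 → Fin N1 → ℂ) (x0 : Fin N2) (x1 : Fin N1) (x2 : Fin N1) (x3 : Fin N1) :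
    bigR R ((Sum.inr x0), (Sum.inl x1)) ((Sum.inl x2), (Sum.inl x3)) = 0 := rfl

@[simp] lemma bigR_rllr {N1 N2 : ℕ} (R : Fin N1 → Fin N2 → Fin N2 → Fin N1 → ℂ) (x0 : Fin N2) (x1 : Fin N1) (x2 : Fin N1) (x3 : Fin N2) :
    bigR R ((Sum.inr x0), (Sum.inl x1)) ((Sum.inl x2), (Sum.inr x3)) = (starRingEnd ℂ) (R x1 x0 x3 x2) := rfl

@[simp] lemma bigR_rlrl {N1 N2 : ℕ} (R : Fin N1 → Fin N2 → Fin N2 → Fin N1 → ℂ) (x0 : Fin N2) (x1 : Fin N1) (x2 : Fin N2) (x3 : Fin N1) :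
    bigR R ((Sum.inr x0), (Sum.inl x1)) ((Sum.inr x2), (Sum.inl x3)) = 0 := rfl

@[simp] lemma bigR_rlrr {N1 N2 : ℕ} (R : Fin N1 → Fin N2 → Fin N2 → Fin N1 → ℂ) (x0 : Fin N2) (x1 : Fin N1) (x2 : Fin N2) (x3 : Fin N2) :
    bigR R ((Sum.inr x0), (Sum.inl x1)) ((Sum.inr x2), (Sum.inr x3)) = 0 := rfl

@[simp] lemma bigR_rrll {N1 N2 : ℕ} (R : Fin N1 → Fin N2 → Fin N2 → Fin N1 → ℂ) (x0 : Fin N2) (x1 : Fin N2) (x2 : Fin N1) (x3 : Fin N1) :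
    bigR R ((Sum.inr x0), (Sum.inr x1)) ((Sum.inl x2), (Sum.inl x3)) = 0 := rfl

@[simp] lemma bigR_rrlr {N1 N2 : ℕ} (R : Fin N1 → Fin N2 → Fin N2 → Fin N1 → ℂ) (x0 : Fin N2) (x1 : Fin N2) (x2 : Fin N1) (x3 : Fin N2) :
    bigR R ((Sum.inr x0), (Sum.inr x1)) ((Sum.inl x2), (Sum.inr x3)) = 0 := rfl

@[simp] lemma bigR_rrrl {N1 N2 : ℕ} (R : Fin N1 → Fin N2 → Fin N2 → Fin N1 → ℂ) (x0 : Fin N2) (x1 : Fin N2) (x2 : Fin N2) (x3 : Fin N1) :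
    bigR R ((Sum.inr x0), (Sum.inr x1)) ((Sum.inr x2), (Sum.inl x3)) = 0 := rfl

@[simp] lemma bigR_rrrr {N1 N2 : ℕ} (R : Fin N1 → Fin N2 → Fin N2 → Fin N1 → ℂ) (x0 : Fin N2) (x1 : Fin N2) (x2 : Fin N2) (x3 : Fin N2) :
    bigR R ((Sum.inr x0), (Sum.inr x1)) ((Sum.inr x2), (Sum.inr x3)) = (if x0 = x3 then 1 else 0) * (if x1 = x2 then 1 else 0) := rfl


set_option maxHeartbeats 4000000 in
/-- The Yang–Baxter equation for 𝓡 is equivalent to the six families of component equations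
for `R` and its conjugate. -/
theorem stmt1 {N1 N2 : ℕ} (R : Fin N1 → Fin N2 → Fin N2 → Fin N1 → ℂ) :
    (op12 (bigR R) * op23 (bigR R) * op12 (bigR R) =
      op23 (bigR R) * op12 (bigR R) * op23 (bigR R)) ↔
    ((∀ (l m : Fin N1) (a b g d : Fin N2),
        ∑ r : Fin N1, R l a g r * R r b d m = ∑ r : Fin N1, R l b d r * R r a g m) ∧
     (∀ (l m : Fin N1) (a b g d : Fin N2),
        ∑ r : Fin N1, (starRingEnd ℂ) (R l a g r) * (starRingEnd ℂ) (R r b d m) =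
          ∑ r : Fin N1, (starRingEnd ℂ) (R l b d r) * (starRingEnd ℂ) (R r a g m)) ∧
     (∀ (l m : Fin N1) (a b g d : Fin N2),
        ∑ r : Fin N1, (starRingEnd ℂ) (R l a g r) * R r b d m =
          ∑ r : Fin N1, R l b d r * (starRingEnd ℂ) (R r a g m)) ∧
     (∀ (l m n r : Fin N1) (a b : Fin N2),
        ∑ g : Fin N2, R l a g n * R m g b r = ∑ g : Fin N2, R m a g r * R l g b n) ∧
     (∀ (l m n r : Fin N1) (a b : Fin N2),
        ∑ g : Fin N2, (starRingEnd ℂ) (R l a g n) * (starRingEnd ℂ) (R m g b r) =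
          ∑ g : Fin N2, (starRingEnd ℂ) (R m a g r) * (starRingEnd ℂ) (R l g b n)) ∧
     (∀ (l m n r : Fin N1) (a b : Fin N2),
        ∑ g : Fin N2, R l a g n * (starRingEnd ℂ) (R m g b r) =
          ∑ g : Fin N2, (starRingEnd ℂ) (R m a g r) * R l g b n)) := by
  constructor
  · intro h
    have H : ∀ p q : (Fin N1 ⊕ Fin N2) × (Fin N1 ⊕ Fin N2) × (Fin N1 ⊕ Fin N2),
        (∑ u1, ∑ u2, ∑ v2, bigR R (p.1, p.2.1) (u1, v2) * bigR R (v2, p.2.2) (u2, q.2.2)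
            * bigR R (u1, u2) (q.1, q.2.1)) =
        (∑ v2, ∑ u2, ∑ u3, bigR R (p.2.1, p.2.2) (v2, u3) * bigR R (p.1, v2) (q.1, u2)
            * bigR R (u2, u3) (q.2.1, q.2.2)) := by
      intro p q
      rw [← lhs_apply, ← rhs_apply]
      exact congrFun (congrFun h p) q
    refine ⟨?_, ?_, ?_, ?_, ?_, ?_⟩
    · intro l m a b g d
      have := H (Sum.inl l, Sum.inr a, Sum.inr b) (Sum.inr d, Sum.inr g, Sum.inl m)
      simpa [Fintype.sum_sum_type, mul_ite, ite_mul, Finset.sum_ite_eq,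
        Finset.sum_ite_eq'] using this
    · intro l m a b g d
      have := H (Sum.inr a, Sum.inr b, Sum.inl l) (Sum.inl m, Sum.inr d, Sum.inr g)
      simpa [Fintype.sum_sum_type, mul_ite, ite_mul, Finset.sum_ite_eq,
        Finset.sum_ite_eq'] using this
    · intro l m a b g d
      have := H (Sum.inr a, Sum.inl l, Sum.inr b) (Sum.inr d, Sum.inl m, Sum.inr g)
      simpa [Fintype.sum_sum_type, mul_ite, ite_mul, Finset.sum_ite_eq,
        Finset.sum_ite_eq'] using this
    · intro l m n r a b
      have := H (Sum.inl l, Sum.inl m, Sum.inr a) (Sum.inr b, Sum.inl r, Sum.inl n)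
      simpa [Fintype.sum_sum_type, mul_ite, ite_mul, Finset.sum_ite_eq,
        Finset.sum_ite_eq'] using this
    · intro l m n r a b
      have := H (Sum.inr a, Sum.inl l, Sum.inl m) (Sum.inl r, Sum.inl n, Sum.inr b)
      simpa [Fintype.sum_sum_type, mul_ite, ite_mul, Finset.sum_ite_eq,
        Finset.sum_ite_eq'] using this
    · intro l m n r a b
      have := H (Sum.inl l, Sum.inr a, Sum.inl m) (Sum.inl r, Sum.inr b, Sum.inl n)
      simpa [Fintype.sum_sum_type, mul_ite, ite_mul, Finset.sum_ite_eq,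
        Finset.sum_ite_eq'] using this
  · rintro ⟨h1, h2, h3, h4, h5, h6⟩
    ext ⟨p1, p2, p3⟩ ⟨q1, q2, q3⟩
    rw [lhs_apply, rhs_apply]
    rcases p1 with a1|a1 <;> rcases p2 with a2|a2 <;> rcases p3 with a3|a3 <;>
      rcases q1 with b1|b1 <;> rcases q2 with b2|b2 <;> rcases q3 with b3|b3 <;>
      simp [Fintype.sum_sum_type, mul_ite, ite_mul, Finset.sum_ite_eq,
        Finset.sum_ite_eq'] <;>
      first
        | (split_ifs <;> rfl)
        | exact h1 _ _ _ _ _ _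
        | exact h2 _ _ _ _ _ _
        | exact h3 _ _ _ _ _ _
        | exact h4 _ _ _ _ _ _
        | exact h5 _ _ _ _ _ _
        | exact h6 _ _ _ _ _ _
end

section
/- Let R be a complex matrix with entries R^{λα}_{βμ} satisfying the reality condition R̄^{λα}_{βμ} R^{μβ}_{γν} = δ^λ_ν δ^α_γ together with the centrality conditions Σ_λ R^{λγ}_{βν} R^{λβ}_{αμ} = δ^γ_α δ_{μν} and Σ_α R^{λα}_{βρ} R^{ρα}_{γμ} = δ^λ_μ δ_{βγ}. Then R satisfies R^{λβ}_{αμ} = R^{μα}_{βλ} = R̄^{μβ}_{αλ}, i.e. R is invariant under simultaneous transposition of the two upper-lower index pairs and equals the complex conjugate of its full index reversal. -/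
/-- The reality condition together with the two centrality conditions imply the symmetry
conditions `R^{λβ}_{αμ} = R^{μα}_{βλ} = conj R^{μβ}_{αλ}`. -/
theorem stmt3 {N1 N2 : ℕ} (R : Fin N1 → Fin N2 → Fin N2 → Fin N1 → ℂ)
    (hreal : ∀ (l n : Fin N1) (a g : Fin N2),
      ∑ m : Fin N1, ∑ b : Fin N2, (starRingEnd ℂ) (R l a b m) * R m b g n =
        (if l = n then (1 : ℂ) else 0) * (if a = g then 1 else 0))
    (hcent1 : ∀ (g a : Fin N2) (m n : Fin N1),
      ∑ l : Fin N1, ∑ b : Fin N2, R l g b n * R l b a m =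
        (if g = a then (1 : ℂ) else 0) * (if m = n then 1 else 0))
    (hcent2 : ∀ (l m : Fin N1) (b g : Fin N2),
      ∑ a : Fin N2, ∑ r : Fin N1, R l a b r * R r a g m =
        (if l = m then (1 : ℂ) else 0) * (if b = g then 1 else 0)) :
    ∀ (l m : Fin N1) (a b : Fin N2),
      R l b a m = R m a b l ∧ R l b a m = (starRingEnd ℂ) (R m b a l) := by
  classical
  set M : Matrix (Fin N1 × Fin N2) (Fin N1 × Fin N2) ℂ :=
    fun p q => R p.1 p.2 q.2 q.1 with hMdef
  set Mc : Matrix (Fin N1 × Fin N2) (Fin N1 × Fin N2) ℂ :=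
    fun p q => (starRingEnd ℂ) (R p.1 p.2 q.2 q.1) with hMcdef
  set T : Matrix (Fin N1 × Fin N2) (Fin N1 × Fin N2) ℂ :=
    fun p q => R p.1 q.2 p.2 q.1 with hTdef
  set U : Matrix (Fin N1 × Fin N2) (Fin N1 × Fin N2) ℂ :=
    fun p q => R q.1 p.2 q.2 p.1 with hUdef
  have h1 : Mc * M = 1 := by
    ext ⟨l, a⟩ ⟨n, g⟩
    rw [Matrix.mul_apply, Fintype.sum_prod_type]
    simp only [hMdef, hMcdef]
    rw [hreal l n a g, Matrix.one_apply]
    by_cases h1 : l = n <;> by_cases h2 : a = g <;>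
      simp [h1, h2, Prod.ext_iff]
  have h2 : T * M = 1 := by
    ext ⟨l, a⟩ ⟨n, g⟩
    rw [Matrix.mul_apply, Fintype.sum_prod_type]
    simp only [hMdef, hTdef]
    rw [Finset.sum_comm, hcent2 l n a g, Matrix.one_apply]
    by_cases h1 : l = n <;> by_cases h2 : a = g <;>
      simp [h1, h2, Prod.ext_iff]
  have h3 : U * M = 1 := by
    ext ⟨n, g⟩ ⟨m, a⟩
    rw [Matrix.mul_apply, Fintype.sum_prod_type]
    simp only [hMdef, hUdef]
    rw [hcent1 g a m n, Matrix.one_apply]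
    by_cases h1 : n = m <;> by_cases h2 : g = a <;>
      simp [h1, h2, Prod.ext_iff, eq_comm]
  have hM : M * Mc = 1 := mul_eq_one_comm.mp h1
  have hT : T = Mc := by
    calc T = T * (M * Mc) := by rw [hM, Matrix.mul_one]
    _ = (T * M) * Mc := by rw [Matrix.mul_assoc]
    _ = Mc := by rw [h2, Matrix.one_mul]
  have hU : U = Mc := by
    calc U = U * (M * Mc) := by rw [hM, Matrix.mul_one]
    _ = (U * M) * Mc := by rw [Matrix.mul_assoc]
    _ = Mc := by rw [h3, Matrix.one_mul]
  have eT : ∀ (x w : Fin N1) (y z : Fin N2),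
      R x z y w = (starRingEnd ℂ) (R x y z w) := by
    intro x w y z
    have := congrFun (congrFun hT (x, y)) (w, z)
    simpa [hTdef, hMcdef] using this
  have eU : ∀ (x w : Fin N1) (y z : Fin N2),
      R w y z x = (starRingEnd ℂ) (R x y z w) := by
    intro x w y z
    have := congrFun (congrFun hU (x, y)) (w, z)
    simpa [hUdef, hMcdef] using this
  intro l m a b
  have first : R l b a m = R m a b l := by
    rw [eT l m a b, ← eU l m a b]
  refine ⟨first, ?_⟩
  have : R m b a l = (starRingEnd ℂ) (R m a b l) := eT m l a b
  calc R l b a m = R m a b l := first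
  _ = (starRingEnd ℂ) ((starRingEnd ℂ) (R m a b l)) := (Complex.conj_conj _).symm
  _ = (starRingEnd ℂ) (R m b a l) := by rw [← this]
end

section
/- Let A, C be complex N₁×N₁ matrices and B, D complex N₂×N₂ matrices, and define R^{λα}_{βμ} = A^λ_μ B^α_β + i C^λ_μ D^α_β. Then R satisfies the two Yang–Baxter-type conditions Σ_ρ R^{λα}_{βρ} R^{ρδ}_{γμ} = Σ_ρ R^{λδ}_{γρ} R^{ρα}_{βμ} and Σ_γ R^{λα}_{γν} R^{μγ}_{βρ} = Σ_γ R^{μα}_{γρ} R^{λγ}_{βν} for all indices if and only if [A,C] = 0 and [B,D] = 0, provided the pairs (B,D) and (A,C) are each linearly independent. -/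
open Complex

lemma aux_li {n : ℕ} (X Y : Matrix (Fin n) (Fin n) ℂ)
    (h : LinearIndependent ℂ ![X, Y])
    (hxy : ∀ i j k l, X i j * Y k l = Y i j * X k l) : False := by
  rw [LinearIndependent.pair_iff] at h
  have hX : X ≠ 0 := by
    intro h0
    have := (h 1 0 (by simp [h0])).1
    simp at this
  obtain ⟨i, j, hij⟩ : ∃ i j, X i j ≠ 0 := by
    by_contra hc
    push_neg at hc
    exact hX (by ext i j; simp [hc])
  obtain ⟨c, hYX⟩ : ∃ c : ℂ, Y = c • X := by
    refine ⟨Y i j / X i j, ?_⟩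
    ext k l
    have h1 := hxy i j k l
    simp only [Matrix.smul_apply, smul_eq_mul]
    field_simp
    linear_combination h1
  have := (h c (-1) (by rw [hYX, neg_one_smul, add_neg_cancel])).2
  simp at this

/-- For `R^{λα}_{βμ} = A^λ_μ B^α_β + i C^λ_μ D^α_β`, the two Yang–Baxter-type conditions
hold if and only if `[A,C] = 0` and `[B,D] = 0`, provided the pairs `(A,C)` and `(B,D)`
are each linearly independent. -/
theorem stmt4 {N1 N2 : ℕ}
    (A C : Matrix (Fin N1) (Fin N1) ℂ) (B D : Matrix (Fin N2) (Fin N2) ℂ)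
    (hAC : LinearIndependent ℂ ![A, C]) (hBD : LinearIndependent ℂ ![B, D])
    (R : Fin N1 → Fin N2 → Fin N2 → Fin N1 → ℂ)
    (hR : ∀ l a b m, R l a b m = A l m * B a b + Complex.I * (C l m * D a b)) :
    ((∀ (l m : Fin N1) (a b g d : Fin N2),
        ∑ r : Fin N1, R l a b r * R r d g m = ∑ r : Fin N1, R l d g r * R r a b m) ∧
     (∀ (l m n r : Fin N1) (a b : Fin N2),
        ∑ g : Fin N2, R l a g n * R m g b r = ∑ g : Fin N2, R m a g r * R l g b n)) ↔
    (A * C - C * A = 0 ∧ B * D - D * B = 0) := by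
  have key1 : ∀ (l m : Fin N1) (a b g d : Fin N2),
      (∑ r : Fin N1, R l a b r * R r d g m) - (∑ r : Fin N1, R l d g r * R r a b m)
      = Complex.I * ((A * C - C * A) l m) * (B a b * D d g - D a b * B d g) := by
    intro l m a b g d
    simp only [hR, Matrix.sub_apply, Matrix.mul_apply, Finset.sum_sub_distrib, Finset.mul_sum,
      Finset.sum_mul, ← Finset.sum_sub_distrib]
    refine Finset.sum_congr rfl fun r _ => by ring
  have key2 : ∀ (l m n r : Fin N1) (a b : Fin N2),
      (∑ g : Fin N2, R l a g n * R m g b r) - (∑ g : Fin N2, R m a g r * R l g b n)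
      = Complex.I * (A l n * C m r - C l n * A m r) * ((B * D - D * B) a b) := by
    intro l m n r a b
    simp only [hR, Matrix.sub_apply, Matrix.mul_apply, Finset.sum_sub_distrib, Finset.mul_sum,
      Finset.sum_mul, ← Finset.sum_sub_distrib]
    refine Finset.sum_congr rfl fun g _ => by ring
  constructor
  · rintro ⟨h1, h2⟩
    have hBDc : B * D - D * B = 0 := by
      by_contra h0
      obtain ⟨a, b, hab⟩ : ∃ a b, (B * D - D * B) a b ≠ 0 := by
        by_contra hc
        push_neg at hc
        exact h0 (by ext a b; simp [hc])
      refine aux_li A C hAC fun l n m r => ?_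
      have := key2 l m n r a b
      rw [sub_eq_zero.mpr (h2 l m n r a b)] at this
      have h3 := (mul_eq_zero.mp this.symm).resolve_right hab
      have h4 := (mul_eq_zero.mp h3).resolve_left Complex.I_ne_zero
      exact sub_eq_zero.mp h4
    have hACc : A * C - C * A = 0 := by
      by_contra h0
      obtain ⟨l, m, hlm⟩ : ∃ l m, (A * C - C * A) l m ≠ 0 := by
        by_contra hc
        push_neg at hc
        exact h0 (by ext l m; simp [hc])
      refine aux_li B D hBD fun a b d g => ?_
      have := key1 l m a b g d
      rw [sub_eq_zero.mpr (h1 l m a b g d)] at this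
      have h3 := mul_eq_zero.mp this.symm
      rcases h3 with h3 | h3
      · exact absurd ((mul_eq_zero.mp h3).resolve_left Complex.I_ne_zero) hlm
      · exact sub_eq_zero.mp h3
    exact ⟨hACc, hBDc⟩
  · rintro ⟨hac, hbd⟩
    constructor
    · intro l m a b g d
      have := key1 l m a b g d
      rw [hac] at this
      simp at this
      exact sub_eq_zero.mp this
    · intro l m n r a b
      have := key2 l m n r a b
      rw [hbd] at this
      simp at this
      exact sub_eq_zero.mp this
end

section
/- Let A, C be commuting real N₁×N₁ matrices with A symmetric and C antisymmetric, and let B, D be commuting real N₂×N₂ matrices with B symmetric and D antisymmetric. Assume A²⊗B² + C²⊗D² = 1⊗1. Then the matrix R^{λα}_{βμ} = A^λ_μ B^α_β + i C^λ_μ D^α_β satisfies: (a) the reality condition Σ_{μ,β} R̄^{λα}_{βμ} R^{μβ}_{γν} = δ^λ_ν δ^α_γ; (b) the symmetry condition R^{λβ}_{αμ} = R^{μα}_{βλ} = R̄^{μβ}_{αλ}; (c) both Yang–Baxter-type conditions Σ_ρ R^{λα}_{βρ} R^{ρδ}_{γμ} = Σ_ρ R^{λδ}_{γρ} R^{ρα}_{βμ}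 and Σ_γ R^{λα}_{γν} R^{μγ}_{βρ} = Σ_γ R^{μα}_{γρ} R^{λγ}_{βν}. -/
open Complex Matrix

/-- Proposition on the ansatz ABCD: for commuting real matrices with `A,B` symmetric and
`C,D` antisymmetric satisfying `A²⊗B² + C²⊗D² = 1⊗1`, the matrix
`R^{λα}_{βμ} = A^λ_μ B^α_β + i C^λ_μ D^α_β` satisfies the reality condition, the symmetry
conditions, and both Yang–Baxter-type conditions. -/
theorem stmt5 {N1 N2 : ℕ}
    (A C : Matrix (Fin N1) (Fin N1) ℝ) (B D : Matrix (Fin N2) (Fin N2) ℝ)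
    (hAC : A * C = C * A) (hBD : B * D = D * B)
    (hA : Aᵀ = A) (hB : Bᵀ = B) (hC : Cᵀ = -C) (hD : Dᵀ = -D)
    (hcent : ∀ (l m : Fin N1) (a b : Fin N2),
      (A * A) l m * (B * B) a b + (C * C) l m * (D * D) a b =
        (if l = m then (1 : ℝ) else 0) * (if a = b then 1 else 0))
    (R : Fin N1 → Fin N2 → Fin N2 → Fin N1 → ℂ)
    (hR : ∀ l a b m, R l a b m = (A l m : ℂ) * (B a b : ℂ) +
      Complex.I * ((C l m : ℂ) * (D a b : ℂ))) :
    -- (a) reality condition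
    ((∀ (l n : Fin N1) (a g : Fin N2),
        ∑ m : Fin N1, ∑ b : Fin N2, (starRingEnd ℂ) (R l a b m) * R m b g n =
          (if l = n then (1 : ℂ) else 0) * (if a = g then 1 else 0)) ∧
     -- (b) symmetry conditions
     (∀ (l m : Fin N1) (a b : Fin N2),
        R l b a m = R m a b l ∧ R l b a m = (starRingEnd ℂ) (R m b a l)) ∧
     -- (c) Yang–Baxter-type conditions
     (∀ (l m : Fin N1) (a b g d : Fin N2),
        ∑ r : Fin N1, R l a b r * R r d g m = ∑ r : Fin N1, R l d g r * R r a b m) ∧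
     (∀ (l m n r : Fin N1) (a b : Fin N2),
        ∑ g : Fin N2, R l a g n * R m g b r = ∑ g : Fin N2, R m a g r * R l g b n)) := by
  have hAC' : ∀ i j, (A * C) i j = (C * A) i j := fun i j => by rw [hAC]
  have hBD' : ∀ i j, (B * D) i j = (D * B) i j := fun i j => by rw [hBD]
  have hA' : ∀ i j, A j i = A i j := fun i j => by
    conv_lhs => rw [← hA, transpose_apply]
  have hB' : ∀ i j, B j i = B i j := fun i j => by
    conv_lhs => rw [← hB, transpose_apply]
  have hC' : ∀ i j, C j i = -C i j := by
    intro i j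
    have := congrFun (congrFun hC i) j
    simpa using this
  have hD' : ∀ i j, D j i = -D i j := by
    intro i j
    have := congrFun (congrFun hD i) j
    simpa using this
  have hconj : ∀ l a b m, (starRingEnd ℂ) (R l a b m) =
      (A l m : ℂ) * (B a b : ℂ) - Complex.I * ((C l m : ℂ) * (D a b : ℂ)) := by
    intro l a b m
    rw [hR]
    simp [Complex.conj_I]
    ring
  refine ⟨?_, ?_, ?_, ?_⟩
  · -- (a)
    intro l n a g
    have key : ∑ m : Fin N1, ∑ b : Fin N2, (starRingEnd ℂ) (R l a b m) * R m b g n =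
        (((A * A) l n : ℝ) : ℂ) * (((B * B) a g : ℝ) : ℂ)
          + (((C * C) l n : ℝ) : ℂ) * (((D * D) a g : ℝ) : ℂ)
          + Complex.I * ((((A * C) l n : ℝ) : ℂ) * (((B * D) a g : ℝ) : ℂ)
              - (((C * A) l n : ℝ) : ℂ) * (((D * B) a g : ℝ) : ℂ)) := by
      simp only [Matrix.mul_apply]
      push_cast
      rw [Finset.sum_mul_sum, Finset.sum_mul_sum, Finset.sum_mul_sum, Finset.sum_mul_sum]
      rw [← Finset.sum_sub_distrib, ← Finset.sum_add_distrib, Finset.mul_sum,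
        ← Finset.sum_add_distrib]
      refine Finset.sum_congr rfl fun m _ => ?_
      rw [← Finset.sum_sub_distrib, ← Finset.sum_add_distrib, Finset.mul_sum,
        ← Finset.sum_add_distrib]
      refine Finset.sum_congr rfl fun b _ => ?_
      rw [hconj, hR]
      ring_nf
      simp [Complex.I_sq]
    rw [key, hAC' l n, hBD' a g, sub_self, mul_zero, add_zero]
    have h2 := congrArg (fun x : ℝ => (x : ℂ)) (hcent l n a g)
    simp only [Complex.ofReal_add, Complex.ofReal_mul, apply_ite Complex.ofReal,
      Complex.ofReal_one, Complex.ofReal_zero] at h2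
    exact h2
  · -- (b)
    intro l m a b
    constructor
    · rw [hR, hR, hA' m l, hB' a b, hC' m l, hD' a b]
      push_cast
      ring
    · rw [hR, hconj, hC' m l, hA' l m]
      push_cast
      ring
  · -- (c1)
    intro l m a b g d
    have expand : ∀ (a b g d : Fin N2), ∑ r : Fin N1, R l a b r * R r d g m =
        (((A * A) l m : ℝ) : ℂ) * ((B a b : ℂ) * (B d g : ℂ))
          - (((C * C) l m : ℝ) : ℂ) * ((D a b : ℂ) * (D d g : ℂ))
          + Complex.I * ((((A * C) l m : ℝ) : ℂ) * ((B a b : ℂ) * (D d g : ℂ))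
              + (((C * A) l m : ℝ) : ℂ) * ((D a b : ℂ) * (B d g : ℂ))) := by
      intro a b g d
      simp only [Matrix.mul_apply]
      push_cast
      simp only [Finset.sum_mul, Finset.mul_sum, ← Finset.sum_add_distrib,
        ← Finset.sum_sub_distrib]
      refine Finset.sum_congr rfl fun r _ => ?_
      rw [hR, hR]
      ring_nf
      simp [Complex.I_sq]
      ring
    rw [expand, expand, ← hAC' l m]
    ring
  · -- (c2)
    intro l m n r a b
    have expand : ∀ (l m n r : Fin N1), ∑ g : Fin N2, R l a g n * R m g b r =
        ((A l n : ℂ) * (A m r : ℂ)) * (((B * B) a b : ℝ) : ℂ)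
          - ((C l n : ℂ) * (C m r : ℂ)) * (((D * D) a b : ℝ) : ℂ)
          + Complex.I * (((A l n : ℂ) * (C m r : ℂ)) * (((B * D) a b : ℝ) : ℂ)
              + ((C l n : ℂ) * (A m r : ℂ)) * (((D * B) a b : ℝ) : ℂ)) := by
      intro l m n r
      simp only [Matrix.mul_apply]
      push_cast
      simp only [Finset.sum_mul, Finset.mul_sum, ← Finset.sum_add_distrib,
        ← Finset.sum_sub_distrib]
      refine Finset.sum_congr rfl fun g _ => ?_
      rw [hR, hR]
      ring_nf
      simp [Complex.I_sq]
      ring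
    rw [expand, expand, ← hBD' a b]
    ring
end

section
/- Let n̂ ∈ ℝ³ be a unit vector and u, v ∈ ℝ with u² + v² = 1. Then the 4×4-block matrix R^{λα}_{βμ} = u δ^λ_μ δ^α_β + i v (J^+_{n̂})^λ_μ (J^-_{n̂})^α_β (indices in {0,1,2,3}) satisfies the reality condition Σ_{μ,β} R̄^{λα}_{βμ} R^{μβ}_{γν} = δ^λ_ν δ^α_γ, the symmetry conditions R^{λβ}_{αμ} = R^{μα}_{βλ} = R̄^{μβ}_{αλ}, and the Yang–Baxter-type conditions Σ_ρ R^{λα}_{βρ} R^{ρδ}_{γμ} = Σ_ρ R^{λδ}_{γρ} R^{ρα}_{βμ} and Σ_γ R^{λα}_{γν} R^{μγ}_{βρ} = Σ_γ R^{μα}_{γρ} R^{λγ}_{βν}. -/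
/-- The Levi-Civita symbol on {1,2,3} (indexed by `Fin 3`), with ε₁₂₃ = 1. -/
def eps (a b c : Fin 3) : ℝ :=
  if (a, b, c) = (0, 1, 2) ∨ (a, b, c) = (1, 2, 0) ∨ (a, b, c) = (2, 0, 1) then 1
  else if (a, b, c) = (0, 2, 1) ∨ (a, b, c) = (2, 1, 0) ∨ (a, b, c) = (1, 0, 2) then -1
  else 0

/-- The quaternionic 4×4 matrices: `Jmat (-1) a = J⁺_a` and `Jmat 1 a = J⁻_a`, with
`(J^±_a)_{μν} = ∓(δ_{0μ}δ_{aν} − δ_{aμ}δ_{0ν}) + Σ_{b,c} ε_{abc} δ_{bμ} δ_{cν}`. -/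
def Jmat (s : ℝ) (a : Fin 3) : Matrix (Fin 4) (Fin 4) ℝ :=
  fun μ ν =>
    s * ((if μ = 0 then (1 : ℝ) else 0) * (if ν = a.succ then 1 else 0)
        - (if μ = a.succ then (1 : ℝ) else 0) * (if ν = 0 then 1 else 0))
    + ∑ b : Fin 3, ∑ c : Fin 3,
        eps a b c * (if μ = b.succ then (1 : ℝ) else 0) * (if ν = c.succ then 1 else 0)


open Complex

set_option maxHeartbeats 1000000 in
lemma Jmat0 (s : ℝ) : Jmat s 0 = !![0, s, 0, 0; -s, 0, 0, 0; 0, 0, 0, 1; 0, 0, -1, 0] := by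
  funext μ ν
  fin_cases μ <;> fin_cases ν <;>
    simp [Jmat, eps, Fin.sum_univ_three, Matrix.vecHead, Matrix.vecTail, Prod.ext_iff] <;>
    norm_num [Fin.ext_iff] <;> first | decide | (intro h; exact absurd (by decide) h)

set_option maxHeartbeats 1000000 in
lemma Jmat1 (s : ℝ) : Jmat s 1 = !![0, 0, s, 0; 0, 0, 0, -1; -s, 0, 0, 0; 0, 1, 0, 0] := by
  funext μ ν
  fin_cases μ <;> fin_cases ν <;>
    simp [Jmat, eps, Fin.sum_univ_three, Matrix.vecHead, Matrix.vecTail, Prod.ext_iff] <;>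
    norm_num [Fin.ext_iff] <;> first | decide | (intro h; exact absurd (by decide) h)

set_option maxHeartbeats 1000000 in
lemma Jmat2 (s : ℝ) : Jmat s 2 = !![0, 0, 0, s; 0, 0, 1, 0; 0, -1, 0, 0; -s, 0, 0, 0] := by
  funext μ ν
  fin_cases μ <;> fin_cases ν <;>
    simp [Jmat, eps, Fin.sum_univ_three, Matrix.vecHead, Matrix.vecTail, Prod.ext_iff] <;>
    norm_num [Fin.ext_iff] <;> first | decide | (intro h; exact absurd (by decide) h)

lemma Psum (s : ℝ) (n : Fin 3 → ℝ) :
    (∑ c : Fin 3, n c • Jmat s c) =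
      !![0, s*n 0, s*n 1, s*n 2;
         -(s*n 0), 0, n 2, -(n 1);
         -(s*n 1), -(n 2), 0, n 0;
         -(s*n 2), n 1, -(n 0), 0] := by
  rw [Fin.sum_univ_three, Jmat0, Jmat1, Jmat2]
  funext μ ν
  fin_cases μ <;> fin_cases ν <;>
    simp [Matrix.add_apply, Matrix.smul_apply, Matrix.vecHead, Matrix.vecTail] <;> ring

lemma Panti (s : ℝ) (n : Fin 3 → ℝ) (l m : Fin 4) :
    (∑ c : Fin 3, n c • Jmat s c) m l = -((∑ c : Fin 3, n c • Jmat s c) l m) := by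
  rw [Psum]
  fin_cases l <;> fin_cases m <;>
    simp [Matrix.vecHead, Matrix.vecTail] <;> ring

lemma Psq (s : ℝ) (hs : s * s = 1) (n : Fin 3 → ℝ) (hn : ∑ a : Fin 3, n a ^ 2 = 1)
    (l m : Fin 4) :
    ∑ r : Fin 4, (∑ c : Fin 3, n c • Jmat s c) l r * (∑ c : Fin 3, n c • Jmat s c) r m
      = -(if l = m then 1 else 0) := by
  rw [Psum]
  have h : n 0 ^ 2 + n 1 ^ 2 + n 2 ^ 2 = 1 := by rw [← hn, Fin.sum_univ_three]
  have key : ∀ x y : ℝ, s*x*(s*y) = x*y := fun x y => by linear_combination (x*y)*hs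
  fin_cases l <;> fin_cases m <;>
    simp [Fin.sum_univ_four, Matrix.vecHead, Matrix.vecTail, key] <;>
    linarith [h]

/-- The toric family `R^{λα}_{βμ} = u δ^λ_μ δ^α_β + i v (J⁺_n̂)^λ_μ (J⁻_n̂)^α_β` with
`u² + v² = 1` and `n̂` a unit vector satisfies the reality, symmetry, and
Yang–Baxter-type conditions. -/
theorem stmt10 (n : Fin 3 → ℝ) (hn : ∑ a : Fin 3, n a ^ 2 = 1)
    (u v : ℝ) (huv : u ^ 2 + v ^ 2 = 1)
    (R : Fin 4 → Fin 4 → Fin 4 → Fin 4 → ℂ)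
    (hR : ∀ l a b m, R l a b m =
      (u : ℂ) * ((if l = m then (1 : ℂ) else 0) * (if a = b then 1 else 0)) +
      Complex.I * (v : ℂ) *
        (((∑ c : Fin 3, n c • Jmat (-1) c) l m : ℝ) *
         ((∑ c : Fin 3, n c • Jmat 1 c) a b : ℝ) : ℝ)) :
    -- reality condition
    ((∀ (l n' : Fin 4) (a g : Fin 4),
        ∑ m : Fin 4, ∑ b : Fin 4, (starRingEnd ℂ) (R l a b m) * R m b g n' =
          (if l = n' then (1 : ℂ) else 0) * (if a = g then 1 else 0)) ∧
     -- symmetry conditions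
     (∀ (l m a b : Fin 4),
        R l b a m = R m a b l ∧ R l b a m = (starRingEnd ℂ) (R m b a l)) ∧
     -- Yang–Baxter-type conditions
     (∀ (l m a b g d : Fin 4),
        ∑ r : Fin 4, R l a b r * R r d g m = ∑ r : Fin 4, R l d g r * R r a b m) ∧
     (∀ (l m n' r a b : Fin 4),
        ∑ g : Fin 4, R l a g n' * R m g b r = ∑ g : Fin 4, R m a g r * R l g b n')) := by
  set P : Fin 4 → Fin 4 → ℂ :=
    fun i j => (((∑ c : Fin 3, n c • Jmat (-1) c) i j : ℝ) : ℂ) with hPdef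
  set M : Fin 4 → Fin 4 → ℂ :=
    fun i j => (((∑ c : Fin 3, n c • Jmat 1 c) i j : ℝ) : ℂ) with hMdef
  set D : Fin 4 → Fin 4 → ℂ := fun i j => if i = j then 1 else 0 with hDdef
  have hRs : ∀ l a b m, R l a b m = u * (D l m * D a b) + I * v * (P l m * M a b) := by
    intro l a b m
    rw [hR, Complex.ofReal_mul]
  have hconj : ∀ l a b m, (starRingEnd ℂ) (R l a b m) =
      u * (D l m * D a b) - I * v * (P l m * M a b) := by
    intro l a b m
    rw [hRs]
    simp [hPdef, hMdef, hDdef, apply_ite (starRingEnd ℂ)]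
    try ring
  -- antisymmetry of P, M (complex form)
  have hPa : ∀ l m, P m l = -P l m := by
    intro l m; simp only [hPdef]; rw [Panti]; push_cast; ring
  have hMa : ∀ l m, M m l = -M l m := by
    intro l m; simp only [hMdef]; rw [Panti]; push_cast; ring
  -- delta collapse
  have hDF : ∀ (F : Fin 4 → Fin 4 → ℂ) (l m : Fin 4), ∑ r, D l r * F r m = F l m := by
    intro F l m
    simp [hDdef, ite_mul, Finset.sum_ite_eq]
  have hFD : ∀ (F : Fin 4 → Fin 4 → ℂ) (l m : Fin 4), ∑ r, F l r * D r m = F l m := by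
    intro F l m
    simp [hDdef, mul_ite, Finset.sum_ite_eq']
  -- squares
  have hPP : ∀ l m, ∑ r, P l r * P r m = -(D l m) := by
    intro l m
    have h := Psq (-1) (by norm_num) n hn l m
    have h2 := congrArg (Complex.ofReal) h
    push_cast [apply_ite Complex.ofReal] at h2
    simp only [hPdef, hDdef]
    simpa using h2
  have hMM : ∀ l m, ∑ r, M l r * M r m = -(D l m) := by
    intro l m
    have h := Psq 1 (by norm_num) n hn l m
    have h2 := congrArg (Complex.ofReal) h
    push_cast [apply_ite Complex.ofReal] at h2
    simp only [hMdef, hDdef]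
    simpa using h2
  -- combination lemmas
  have piece : ∀ (c : ℂ) (f g : Fin 4 → ℂ),
      (∑ m : Fin 4, ∑ b : Fin 4, c * (f m * g b)) = c * ((∑ m, f m) * (∑ b, g b)) := by
    intro c f g
    rw [Finset.sum_mul_sum]
    simp [Finset.mul_sum]
  have combine : ∀ (c₁ c₂ c₃ c₄ : ℂ) (f₁ g₁ f₂ g₂ f₃ g₃ f₄ g₄ : Fin 4 → ℂ),
      (∑ m : Fin 4, ∑ b : Fin 4,
        (c₁ * (f₁ m * g₁ b) + c₂ * (f₂ m * g₂ b) + c₃ * (f₃ m * g₃ b) + c₄ * (f₄ m * g₄ b)))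
      = c₁ * ((∑ m, f₁ m) * (∑ b, g₁ b)) + c₂ * ((∑ m, f₂ m) * (∑ b, g₂ b))
        + c₃ * ((∑ m, f₃ m) * (∑ b, g₃ b)) + c₄ * ((∑ m, f₄ m) * (∑ b, g₄ b)) := by
    intro c₁ c₂ c₃ c₄ f₁ g₁ f₂ g₂ f₃ g₃ f₄ g₄
    simp only [Finset.sum_add_distrib, piece]
  have combine1 : ∀ (c₁ c₂ c₃ c₄ : ℂ) (f₁ f₂ f₃ f₄ : Fin 4 → ℂ),
      (∑ r : Fin 4, (c₁ * f₁ r + c₂ * f₂ r + c₃ * f₃ r + c₄ * f₄ r))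
      = c₁ * (∑ r, f₁ r) + c₂ * (∑ r, f₂ r) + c₃ * (∑ r, f₃ r) + c₄ * (∑ r, f₄ r) := by
    intro c₁ c₂ c₃ c₄ f₁ f₂ f₃ f₄
    simp only [Finset.sum_add_distrib, Finset.mul_sum]
  have huvC : (u : ℂ) ^ 2 + (v : ℂ) ^ 2 = 1 := by exact_mod_cast huv
  have hDs : ∀ l m : Fin 4, D l m = D m l := by
    intro l m; simp only [hDdef]; simp [eq_comm]
  refine ⟨?_, ?_, ?_, ?_⟩
  · -- reality
    intro l n' a g
    calc ∑ m : Fin 4, ∑ b : Fin 4, (starRingEnd ℂ) (R l a b m) * R m b g n'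
        = ∑ m : Fin 4, ∑ b : Fin 4,
            ((u*u) * ((D l m * D m n') * (D a b * D b g))
            + (I*u*v) * ((D l m * P m n') * (D a b * M b g))
            + (-(I*u*v)) * ((P l m * D m n') * (M a b * D b g))
            + (-(I*I)*(v*v)) * ((P l m * P m n') * (M a b * M b g))) := by
          refine Finset.sum_congr rfl fun m _ => Finset.sum_congr rfl fun b _ => ?_
          rw [hconj, hRs]; ring
      _ = (u*u) * ((∑ m, D l m * D m n') * (∑ b, D a b * D b g))
            + (I*u*v) * ((∑ m, D l m * P m n') * (∑ b, D a b * M b g))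
            + (-(I*u*v)) * ((∑ m, P l m * D m n') * (∑ b, M a b * D b g))
            + (-(I*I)*(v*v)) * ((∑ m, P l m * P m n') * (∑ b, M a b * M b g)) :=
          combine _ _ _ _ _ _ _ _ _ _ _ _
      _ = D l n' * D a g := by
          simp only [hDF, hFD, hPP, hMM]
          linear_combination (D l n' * D a g) * huvC
            - (v * v * (D l n' * D a g)) * Complex.I_mul_I
  · -- symmetry
    intro l m a b
    constructor
    · rw [hRs l b a m, hRs m a b l, hPa l m, hMa b a, hDs m l, hDs a b]; ring
    · rw [hRs l b a m, hconj m b a l, hPa l m, hDs m l]; ring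
  · -- YB 1
    intro l m a b g d
    have e1 : ∑ r : Fin 4, R l a b r * R r d g m
        = (u*u) * (D a b * D d g) * (D l m)
          + (I*u*v) * (D a b * M d g) * (P l m)
          + (I*u*v) * (M a b * D d g) * (P l m)
          + ((I*I)*(v*v) * (M a b * M d g)) * (-(D l m)) := by
      calc ∑ r : Fin 4, R l a b r * R r d g m
          = ∑ r : Fin 4,
              ((u*u) * (D a b * D d g) * (D l r * D r m)
              + (I*u*v) * (D a b * M d g) * (D l r * P r m)
              + (I*u*v) * (M a b * D d g) * (P l r * D r m)
              + ((I*I)*(v*v) * (M a b * M d g)) * (P l r * P r m)) := by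
            refine Finset.sum_congr rfl fun r _ => ?_
            rw [hRs, hRs]; ring
        _ = _ := by
            rw [combine1]
            simp only [hDF, hFD, hPP, hMM]
    have e2 : ∑ r : Fin 4, R l d g r * R r a b m
        = (u*u) * (D d g * D a b) * (D l m)
          + (I*u*v) * (D d g * M a b) * (P l m)
          + (I*u*v) * (M d g * D a b) * (P l m)
          + ((I*I)*(v*v) * (M d g * M a b)) * (-(D l m)) := by
      calc ∑ r : Fin 4, R l d g r * R r a b m
          = ∑ r : Fin 4,
              ((u*u) * (D d g * D a b) * (D l r * D r m)
              + (I*u*v) * (D d g * M a b) * (D l r * P r m)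
              + (I*u*v) * (M d g * D a b) * (P l r * D r m)
              + ((I*I)*(v*v) * (M d g * M a b)) * (P l r * P r m)) := by
            refine Finset.sum_congr rfl fun r _ => ?_
            rw [hRs, hRs]; ring
        _ = _ := by
            rw [combine1]
            simp only [hDF, hFD, hPP, hMM]
    rw [e1, e2]; ring
  · -- YB 2
    intro l m n' r a b
    have e1 : ∀ (l n' m r : Fin 4), ∑ g : Fin 4, R l a g n' * R m g b r
        = (u*u) * (D l n' * D m r) * (D a b)
          + (I*u*v) * (D l n' * P m r) * (M a b)
          + (I*u*v) * (P l n' * D m r) * (M a b)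
          + ((I*I)*(v*v) * (P l n' * P m r)) * (-(D a b)) := by
      intro l n' m r
      calc ∑ g : Fin 4, R l a g n' * R m g b r
          = ∑ g : Fin 4,
              ((u*u) * (D l n' * D m r) * (D a g * D g b)
              + (I*u*v) * (D l n' * P m r) * (D a g * M g b)
              + (I*u*v) * (P l n' * D m r) * (M a g * D g b)
              + ((I*I)*(v*v) * (P l n' * P m r)) * (M a g * M g b)) := by
            refine Finset.sum_congr rfl fun g _ => ?_
            rw [hRs, hRs]; ring
        _ = _ := by
            rw [combine1]
            simp only [hDF, hFD, hPP, hMM]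
    rw [e1, e1]; ring
end

section
/- Let n̂₁, n̂₂ ∈ ℝ³ be orthonormal vectors, u⁰, u¹, u² ∈ ℝ with (u⁰)² + (u¹)² + (u²)² = 1, and set ū = u¹ n̂₁ + u² n̂₂. Then the matrix R^{λα}_{βμ} = u⁰ δ^λ_μ δ^α_β + i (J^+_{n̂₁})^λ_μ (J^+_{ū})^α_β satisfies the reality condition Σ_{μ,β} R̄^{λα}_{βμ} R^{μβ}_{γν} = δ^λ_ν δ^α_γ and the centrality conditions Σ_λ R^{λγ}_{βν} R^{λβ}_{αμ} = δ^γ_α δ_{μν} and Σ_α R^{λα}_{βρ} R^{ρα}_{γμ} = δ^λ_μ δ_{βγ}. -/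
open Complex

section Aux

open Matrix Kronecker

set_option linter.unnecessarySeqFocus false

/-- Explicit form of `J⁺_x = ∑ x a • J⁺_a`. -/
def ER (x : Fin 3 → ℝ) : Matrix (Fin 4) (Fin 4) ℝ :=
  !![0, -x 0, -x 1, -x 2; x 0, 0, x 2, -x 1; x 1, -x 2, 0, x 0; x 2, x 1, -x 0, 0]

lemma hS (x : Fin 3 → ℝ) (l m : Fin 4) : (∑ c, x c • Jmat (-1) c) l m = ER x l m := by
  fin_cases l <;> fin_cases m <;>
    simp [Jmat, eps, Fin.sum_univ_three, Finset.sum_apply, Pi.smul_apply, ER, Fin.isValue] <;>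
    norm_num [Fin.ext_iff] <;> (try (intro h; exact absurd rfl h)) <;>
    (try rw [if_pos (by decide)]) <;> ring

lemma ER_mul (x : Fin 3 → ℝ) : ER x * ER x = (-(∑ a, x a ^ 2)) • 1 := by
  ext l n
  fin_cases l <;> fin_cases n <;>
    simp [ER, Matrix.mul_apply, Fin.sum_univ_four, Fin.sum_univ_three, Matrix.one_apply,
      Matrix.smul_apply] <;> ring

lemma ER_anti (x : Fin 3 → ℝ) (l m : Fin 4) : ER x m l = - ER x l m := by
  fin_cases l <;> fin_cases m <;> simp [ER]

/-- Complexification of a real 4×4 matrix. -/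
noncomputable def C4 (M : Matrix (Fin 4) (Fin 4) ℝ) : Matrix (Fin 4) (Fin 4) ℂ :=
  M.map Complex.ofReal

lemma C4_mul (M N : Matrix (Fin 4) (Fin 4) ℝ) : C4 (M * N) = C4 M * C4 N := by
  ext l n
  simp [C4, Matrix.mul_apply]

lemma C4_smul (r : ℝ) (M : Matrix (Fin 4) (Fin 4) ℝ) : C4 (r • M) = (r : ℂ) • C4 M := by
  ext l n; simp [C4]

lemma C4_one : C4 1 = 1 := by
  ext l n
  simp [C4, Matrix.one_apply]
  split_ifs <;> simp

lemma delta_comm (i j : Fin 4) : (if i = j then (1 : ℂ) else 0) = if j = i then 1 else 0 := by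
  split_ifs with h1 h2 <;> simp_all

lemma mat_key (K L : Matrix (Fin 4 × Fin 4) (Fin 4 × Fin 4) ℂ) (u0 t : ℂ)
    (hc : K = -L) (hp : K * L = (-t) • 1) (hut : u0 ^ 2 + t = 1) :
    (u0 • 1 + Complex.I • K) * (u0 • 1 + Complex.I • L) = 1 := by
  have h : (u0 • 1 + Complex.I • K) * (u0 • 1 + Complex.I • L)
      = (u0 * u0) • (1 : Matrix (Fin 4 × Fin 4) (Fin 4 × Fin 4) ℂ)
        + (u0 * Complex.I) • (K + L) + (Complex.I * Complex.I) • (K * L) := by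
    simp only [add_mul, mul_add, Matrix.smul_mul, Matrix.mul_smul, Matrix.one_mul,
      Matrix.mul_one]
    module
  rw [h, hp, hc, neg_add_cancel, smul_zero, add_zero, smul_smul, ← add_smul]
  have h2 : u0 * u0 + Complex.I * Complex.I * -t = 1 := by
    linear_combination hut + (-t) * Complex.I_mul_I
  rw [h2, one_smul]

lemma neg_kron (A B : Matrix (Fin 4) (Fin 4) ℂ) : (-A) ⊗ₖ B = -(A ⊗ₖ B) := by
  ext ⟨i, j⟩ ⟨k, l⟩
  simp [Matrix.kroneckerMap_apply]

lemma kron_neg (A B : Matrix (Fin 4) (Fin 4) ℂ) : A ⊗ₖ (-B) = -(A ⊗ₖ B) := by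
  ext ⟨i, j⟩ ⟨k, l⟩
  simp [Matrix.kroneckerMap_apply]

end Aux
section Main
open Matrix Kronecker

/-- The quaternionic family `R^{λα}_{βμ} = u⁰ δ^λ_μ δ^α_β + i (J⁺_{n̂₁})^λ_μ (J⁺_ū)^α_β`
with `ū = u¹ n̂₁ + u² n̂₂`, `(u⁰)² + (u¹)² + (u²)² = 1`, and `n̂₁, n̂₂` orthonormal,
satisfies the reality and centrality conditions. -/
theorem stmt11 (n1 n2 : Fin 3 → ℝ)
    (hn1 : ∑ a : Fin 3, n1 a ^ 2 = 1) (hn2 : ∑ a : Fin 3, n2 a ^ 2 = 1)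
    (hortho : ∑ a : Fin 3, n1 a * n2 a = 0)
    (u0 u1 u2 : ℝ) (hu : u0 ^ 2 + u1 ^ 2 + u2 ^ 2 = 1)
    (ubar : Fin 3 → ℝ) (hubar : ubar = fun a => u1 * n1 a + u2 * n2 a)
    (R : Fin 4 → Fin 4 → Fin 4 → Fin 4 → ℂ)
    (hR : ∀ l a b m, R l a b m =
      (u0 : ℂ) * ((if l = m then (1 : ℂ) else 0) * (if a = b then 1 else 0)) +
      Complex.I *
        (((∑ c : Fin 3, n1 c • Jmat (-1) c) l m : ℝ) *
         ((∑ c : Fin 3, ubar c • Jmat (-1) c) a b : ℝ) : ℝ)) :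
    -- reality condition
    ((∀ (l n : Fin 4) (a g : Fin 4),
        ∑ m : Fin 4, ∑ b : Fin 4, (starRingEnd ℂ) (R l a b m) * R m b g n =
          (if l = n then (1 : ℂ) else 0) * (if a = g then 1 else 0)) ∧
     -- centrality conditions
     (∀ (g a m n : Fin 4),
        ∑ l : Fin 4, ∑ b : Fin 4, R l g b n * R l b a m =
          (if g = a then (1 : ℂ) else 0) * (if m = n then 1 else 0)) ∧
     (∀ (l m b g : Fin 4),
        ∑ a : Fin 4, ∑ r : Fin 4, R l a b r * R r a g m =
          (if l = m then (1 : ℂ) else 0) * (if b = g then 1 else 0))) := by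
  -- notation
  set t : ℝ := u1 ^ 2 + u2 ^ 2 with ht
  have hub : ∑ a : Fin 3, ubar a ^ 2 = t := by
    subst hubar
    simp only [Fin.sum_univ_three] at hn1 hn2 hortho ⊢
    linear_combination u1 ^ 2 * hn1 + u2 ^ 2 * hn2 + 2 * u1 * u2 * hortho
  set Ac : Matrix (Fin 4) (Fin 4) ℂ := C4 (ER n1) with hAc
  set Bc : Matrix (Fin 4) (Fin 4) ℂ := C4 (ER ubar) with hBc
  have hAA : Ac * Ac = (-1 : ℂ) • 1 := by
    rw [hAc, ← C4_mul, ER_mul, hn1]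
    rw [show (-(1:ℝ)) • (1 : Matrix (Fin 4) (Fin 4) ℝ) = ((-1 : ℝ)) • 1 from rfl, C4_smul, C4_one]
    push_cast
    rfl
  have hBB : Bc * Bc = (-(t : ℂ)) • 1 := by
    rw [hBc, ← C4_mul, ER_mul, hub, C4_smul, C4_one]
    push_cast
    rfl
  have hutR : u0 ^ 2 + t = 1 := by rw [ht]; linarith [hu]
  have hut : (u0 : ℂ) ^ 2 + (t : ℂ) = 1 := by exact_mod_cast congrArg Complex.ofReal hutR
  -- the three matrices
  set M2 : Matrix (Fin 4 × Fin 4) (Fin 4 × Fin 4) ℂ := (u0 : ℂ) • 1 + Complex.I • (Ac ⊗ₖ Bc)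
    with hM2
  set M1 : Matrix (Fin 4 × Fin 4) (Fin 4 × Fin 4) ℂ := (u0 : ℂ) • 1 + Complex.I • ((-Ac) ⊗ₖ Bc)
    with hM1
  set M1' : Matrix (Fin 4 × Fin 4) (Fin 4 × Fin 4) ℂ := (u0 : ℂ) • 1 + Complex.I • (Ac ⊗ₖ (-Bc))
    with hM1'
  have key1 : M1 * M2 = 1 := by
    apply mat_key _ _ _ (t : ℂ) (neg_kron Ac Bc) _ hut
    have hA1 : (-Ac) * Ac = ((1 : ℂ) • 1 : Matrix (Fin 4) (Fin 4) ℂ) := by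
      rw [Matrix.neg_mul, hAA, ← neg_smul, neg_neg]
    rw [← Matrix.mul_kronecker_mul, hA1, hBB, Matrix.smul_kronecker, Matrix.kronecker_smul,
      Matrix.one_kronecker_one, smul_smul, one_mul]
  have key2 : M1' * M2 = 1 := by
    apply mat_key _ _ _ (t : ℂ) (kron_neg Ac Bc) _ hut
    have hB1 : (-Bc) * Bc = ((t : ℂ) • 1 : Matrix (Fin 4) (Fin 4) ℂ) := by
      rw [Matrix.neg_mul, hBB, ← neg_smul, neg_neg]
    rw [← Matrix.mul_kronecker_mul, hAA, hB1, Matrix.smul_kronecker, Matrix.kronecker_smul,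
      Matrix.one_kronecker_one, smul_smul]
    rw [show ((-1 : ℂ) * t) = -(t : ℂ) by ring, neg_smul]
  -- entry identification
  have hE2 : ∀ l a b m, M2 (l, a) (m, b) = R l a b m := by
    intro l a b m
    rw [hR l a b m, hS n1, hS ubar]
    simp only [hM2, Matrix.add_apply, Matrix.smul_apply, Matrix.one_apply,
      Matrix.kroneckerMap_apply, hAc, hBc, C4, Matrix.map_apply, Prod.mk.injEq, ite_and,
      smul_eq_mul]
    push_cast
    by_cases h1 : l = m <;> by_cases h2 : a = b <;> simp [h1, h2] <;> ring
  have hconj : ∀ l a b m, (starRingEnd ℂ) (R l a b m) =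
      (u0 : ℂ) * ((if l = m then (1 : ℂ) else 0) * (if a = b then 1 else 0)) -
      Complex.I * ((ER n1 l m : ℝ) : ℂ) * ((ER ubar a b : ℝ) : ℂ) := by
    intro l a b m
    rw [hR l a b m, hS n1, hS ubar]
    simp only [_root_.map_add, _root_.map_mul, Complex.conj_I, Complex.conj_ofReal,
      _root_.map_one, _root_.map_zero, apply_ite (starRingEnd ℂ)]
    push_cast
    ring
  have hE1 : ∀ l a b m, M1 (l, a) (m, b) = (starRingEnd ℂ) (R l a b m) := by
    intro l a b m
    rw [hconj l a b m]
    simp only [hM1, Matrix.add_apply, Matrix.smul_apply, Matrix.one_apply,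
      Matrix.kroneckerMap_apply, hAc, hBc, C4, Matrix.map_apply, Matrix.neg_apply,
      Prod.mk.injEq, ite_and, smul_eq_mul]
    push_cast
    by_cases h1 : l = m <;> by_cases h2 : a = b <;> simp [h1, h2] <;> ring
  have hE1c : ∀ l g b n, M1 (n, g) (l, b) = R l g b n := by
    intro l g b n
    rw [hR l g b n, hS n1, hS ubar, ER_anti n1 n l, delta_comm l n]
    simp only [hM1, Matrix.add_apply, Matrix.smul_apply, Matrix.one_apply,
      Matrix.kroneckerMap_apply, hAc, hBc, C4, Matrix.map_apply, Matrix.neg_apply,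
      Prod.mk.injEq, ite_and, smul_eq_mul]
    push_cast
    by_cases h1 : n = l <;> by_cases h2 : g = b <;> simp [h1, h2] <;> ring
  have hE1' : ∀ l a b r, M1' (l, b) (r, a) = R l a b r := by
    intro l a b r
    rw [hR l a b r, hS n1, hS ubar, ER_anti ubar b a, delta_comm a b]
    simp only [hM1', Matrix.add_apply, Matrix.smul_apply, Matrix.one_apply,
      Matrix.kroneckerMap_apply, hAc, hBc, C4, Matrix.map_apply, Matrix.neg_apply,
      Prod.mk.injEq, ite_and, smul_eq_mul]
    push_cast
    by_cases h1 : l = r <;> by_cases h2 : b = a <;> simp [h1, h2] <;> ring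
  refine ⟨?_, ?_, ?_⟩
  · -- reality
    intro l n a g
    calc ∑ m : Fin 4, ∑ b : Fin 4, (starRingEnd ℂ) (R l a b m) * R m b g n
        = ∑ p : Fin 4 × Fin 4, M1 (l, a) p * M2 p (n, g) := by
          rw [Fintype.sum_prod_type]
          exact Finset.sum_congr rfl fun m _ => Finset.sum_congr rfl fun b _ => by
            rw [hE1 l a b m, hE2 m b g n]
      _ = (M1 * M2) (l, a) (n, g) := (Matrix.mul_apply).symm
      _ = (1 : Matrix (Fin 4 × Fin 4) (Fin 4 × Fin 4) ℂ) (l, a) (n, g) := by rw [key1]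
      _ = (if l = n then (1 : ℂ) else 0) * (if a = g then 1 else 0) := by
          simp only [Matrix.one_apply, Prod.mk.injEq, ite_and]
          by_cases h1 : l = n <;> by_cases h2 : a = g <;> simp [h1, h2]
  · -- centrality 1
    intro g a m n
    calc ∑ l : Fin 4, ∑ b : Fin 4, R l g b n * R l b a m
        = ∑ p : Fin 4 × Fin 4, M1 (n, g) p * M2 p (m, a) := by
          rw [Fintype.sum_prod_type]
          exact Finset.sum_congr rfl fun l _ => Finset.sum_congr rfl fun b _ => by
            rw [hE1c l g b n, hE2 l b a m]
      _ = (M1 * M2) (n, g) (m, a) := (Matrix.mul_apply).symm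
      _ = (1 : Matrix (Fin 4 × Fin 4) (Fin 4 × Fin 4) ℂ) (n, g) (m, a) := by rw [key1]
      _ = (if g = a then (1 : ℂ) else 0) * (if m = n then 1 else 0) := by
          simp only [Matrix.one_apply, Prod.mk.injEq, ite_and]
          by_cases h1 : n = m
          · subst h1; by_cases h2 : g = a <;> simp [h2]
          · rw [if_neg h1, if_neg (show ¬m = n from fun h => h1 h.symm)]; ring
  · -- centrality 2
    intro l m b g
    calc ∑ a : Fin 4, ∑ r : Fin 4, R l a b r * R r a g m
        = ∑ p : Fin 4 × Fin 4, M1' (l, b) p * M2 p (m, g) := by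
          rw [Finset.sum_comm, Fintype.sum_prod_type]
          exact Finset.sum_congr rfl fun r _ => Finset.sum_congr rfl fun a _ => by
            rw [hE1' l a b r, hE2 r a g m]
      _ = (M1' * M2) (l, b) (m, g) := (Matrix.mul_apply).symm
      _ = (1 : Matrix (Fin 4 × Fin 4) (Fin 4 × Fin 4) ℂ) (l, b) (m, g) := by rw [key2]
      _ = (if l = m then (1 : ℂ) else 0) * (if b = g then 1 else 0) := by
          simp only [Matrix.one_apply, Prod.mk.injEq, ite_and]
          by_cases h1 : l = m <;> by_cases h2 : b = g <;> simp [h1, h2]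

end Main
end

section
/- Let 𝒜 contain elements x₁^λ, x₂^α with x₁^λ x₁^μ = x₁^μ x₁^λ, x₂^α x₂^β = x₂^β x₂^α, and x₁^λ x₂^α = Σ R^{λα}_{βμ} x₂^β x₁^μ, and let 𝒞 contain Γ¹_λ, Γ²_α with Γ¹_λ Γ¹_μ + Γ¹_μ Γ¹_λ = 2δ_{λμ}, Γ²_α Γ²_β + Γ²_β Γ²_α = 2δ_{αβ}, and Γ²_β Γ¹_μ + Σ R^{λα}_{βμ} Γ¹_λ Γ²_α = 0. Then setting Γ(x) = Σ_λ Γ¹_λ ⊗ x₁^λ + Σ_α Γ²_α ⊗ x₂^α in 𝒞 ⊗ 𝒜, one has Γ(x)² = 1 ⊗ (Σ_λ (x₁^λ)² + Σ_α (x₂^α)²). -/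
open scoped TensorProduct
open Finset

private lemma sum_swap4 {M ι1 ι2 ι3 ι4 : Type*} [AddCommMonoid M]
    [Fintype ι1] [Fintype ι2] [Fintype ι3] [Fintype ι4]
    (f : ι1 → ι2 → ι3 → ι4 → M) :
    ∑ i : ι1, ∑ j : ι2, ∑ k : ι3, ∑ n : ι4, f i j k n
      = ∑ k : ι3, ∑ n : ι4, ∑ i : ι1, ∑ j : ι2, f i j k n := by
  calc ∑ i : ι1, ∑ j : ι2, ∑ k : ι3, ∑ n : ι4, f i j k n
      = ∑ i : ι1, ∑ k : ι3, ∑ j : ι2, ∑ n : ι4, f i j k n :=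
        Finset.sum_congr rfl fun i _ => Finset.sum_comm
    _ = ∑ k : ι3, ∑ i : ι1, ∑ j : ι2, ∑ n : ι4, f i j k n := Finset.sum_comm
    _ = ∑ k : ι3, ∑ i : ι1, ∑ n : ι4, ∑ j : ι2, f i j k n :=
        Finset.sum_congr rfl fun k _ => Finset.sum_congr rfl fun i _ => Finset.sum_comm
    _ = ∑ k : ι3, ∑ n : ι4, ∑ i : ι1, ∑ j : ι2, f i j k n :=
        Finset.sum_congr rfl fun k _ => Finset.sum_comm

private lemma diag_helper {C A : Type*} [Ring C] [Algebra ℂ C] [Ring A] [Algebra ℂ A]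
    {n : ℕ} (Γ : Fin n → C) (x : Fin n → A)
    (hc : ∀ l m, x l * x m = x m * x l)
    (hΓ : ∀ l m, Γ l * Γ m + Γ m * Γ l = if l = m then (2 : C) else 0) :
    ∑ l : Fin n, ∑ m : Fin n, (Γ l * Γ m) ⊗ₜ[ℂ] (x l * x m)
      = (1 : C) ⊗ₜ[ℂ] (∑ l : Fin n, x l ^ 2) := by
  apply smul_right_injective (C ⊗[ℂ] A) (two_ne_zero (α := ℂ))
  calc (2 : ℂ) • ∑ l : Fin n, ∑ m : Fin n, (Γ l * Γ m) ⊗ₜ[ℂ] (x l * x m)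
      = (∑ l : Fin n, ∑ m : Fin n, (Γ l * Γ m) ⊗ₜ[ℂ] (x l * x m))
        + ∑ l : Fin n, ∑ m : Fin n, (Γ m * Γ l) ⊗ₜ[ℂ] (x l * x m) := by
        rw [two_smul]
        congr 1
        calc ∑ l : Fin n, ∑ m : Fin n, (Γ l * Γ m) ⊗ₜ[ℂ] (x l * x m)
            = ∑ l : Fin n, ∑ m : Fin n, (Γ l * Γ m) ⊗ₜ[ℂ] (x m * x l) :=
              Finset.sum_congr rfl fun l _ => Finset.sum_congr rfl fun m _ => by rw [hc]
          _ = ∑ m : Fin n, ∑ l : Fin n, (Γ l * Γ m) ⊗ₜ[ℂ] (x m * x l) := Finset.sum_comm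
    _ = ∑ l : Fin n, ∑ m : Fin n, (Γ l * Γ m + Γ m * Γ l) ⊗ₜ[ℂ] (x l * x m) := by
        rw [← Finset.sum_add_distrib]
        refine Finset.sum_congr rfl fun l _ => ?_
        rw [← Finset.sum_add_distrib]
        exact Finset.sum_congr rfl fun m _ => (TensorProduct.add_tmul _ _ _).symm
    _ = ∑ l : Fin n, ∑ m : Fin n,
          ((if l = m then (2 : C) else 0) ⊗ₜ[ℂ] (x l * x m)) := by
        refine Finset.sum_congr rfl fun l _ => Finset.sum_congr rfl fun m _ => ?_
        rw [hΓ]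
    _ = ∑ l : Fin n, (2 : C) ⊗ₜ[ℂ] (x l * x l) := by
        refine Finset.sum_congr rfl fun l _ => ?_
        simp [TensorProduct.ite_tmul]
    _ = (2 : ℂ) • ((1 : C) ⊗ₜ[ℂ] (∑ l : Fin n, x l ^ 2)) := by
        rw [TensorProduct.tmul_sum, Finset.smul_sum]
        refine Finset.sum_congr rfl fun l _ => ?_
        rw [TensorProduct.smul_tmul', sq, two_smul, one_add_one_eq_two]

/-- With the full set of relations in 𝒜 and Clifford relations in 𝒞, the element
`Γ(x) = Σ Γ¹_λ ⊗ x₁^λ + Σ Γ²_α ⊗ x₂^α` satisfies `Γ(x)² = 1 ⊗ ‖x‖²`. -/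
theorem stmt14 {N1 N2 : ℕ} {C A : Type*} [Ring C] [Algebra ℂ C] [Ring A] [Algebra ℂ A]
    (R : Fin N1 → Fin N2 → Fin N2 → Fin N1 → ℂ)
    (Γ1 : Fin N1 → C) (Γ2 : Fin N2 → C) (x1 : Fin N1 → A) (x2 : Fin N2 → A)
    (hc1 : ∀ l m, x1 l * x1 m = x1 m * x1 l)
    (hc2 : ∀ a b, x2 a * x2 b = x2 b * x2 a)
    (hrel : ∀ l a, x1 l * x2 a = ∑ b : Fin N2, ∑ m : Fin N1, R l a b m • (x2 b * x1 m))
    (hΓ1 : ∀ l m, Γ1 l * Γ1 m + Γ1 m * Γ1 l = if l = m then (2 : C) else 0)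
    (hΓ2 : ∀ a b, Γ2 a * Γ2 b + Γ2 b * Γ2 a = if a = b then (2 : C) else 0)
    (hcl : ∀ b m, Γ2 b * Γ1 m + ∑ l : Fin N1, ∑ a : Fin N2, R l a b m • (Γ1 l * Γ2 a) = 0) :
    ((∑ l : Fin N1, Γ1 l ⊗ₜ[ℂ] x1 l) + ∑ a : Fin N2, Γ2 a ⊗ₜ[ℂ] x2 a) ^ 2 =
      (1 : C) ⊗ₜ[ℂ] ((∑ l : Fin N1, x1 l ^ 2) + ∑ a : Fin N2, x2 a ^ 2) := by
  have hA := diag_helper Γ1 x1 hc1 hΓ1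
  have hB := diag_helper Γ2 x2 hc2 hΓ2
  have hX : ∑ l : Fin N1, ∑ a : Fin N2, (Γ1 l * Γ2 a) ⊗ₜ[ℂ] (x1 l * x2 a)
      = - ∑ b : Fin N2, ∑ m : Fin N1, (Γ2 b * Γ1 m) ⊗ₜ[ℂ] (x2 b * x1 m) := by
    have step1 : ∑ l : Fin N1, ∑ a : Fin N2, (Γ1 l * Γ2 a) ⊗ₜ[ℂ] (x1 l * x2 a)
        = ∑ l : Fin N1, ∑ a : Fin N2, ∑ b : Fin N2, ∑ m : Fin N1,
            R l a b m • ((Γ1 l * Γ2 a) ⊗ₜ[ℂ] (x2 b * x1 m)) := by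
      refine Finset.sum_congr rfl fun l _ => Finset.sum_congr rfl fun a _ => ?_
      rw [hrel, TensorProduct.tmul_sum]
      refine Finset.sum_congr rfl fun b _ => ?_
      rw [TensorProduct.tmul_sum]
      exact Finset.sum_congr rfl fun m _ => by rw [TensorProduct.tmul_smul]
    rw [step1, sum_swap4, ← Finset.sum_neg_distrib]
    refine Finset.sum_congr rfl fun b _ => ?_
    rw [← Finset.sum_neg_distrib]
    refine Finset.sum_congr rfl fun m _ => ?_
    calc ∑ l : Fin N1, ∑ a : Fin N2, R l a b m • ((Γ1 l * Γ2 a) ⊗ₜ[ℂ] (x2 b * x1 m))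
        = (∑ l : Fin N1, ∑ a : Fin N2, R l a b m • (Γ1 l * Γ2 a)) ⊗ₜ[ℂ] (x2 b * x1 m) := by
          rw [TensorProduct.sum_tmul]
          refine Finset.sum_congr rfl fun l _ => ?_
          rw [TensorProduct.sum_tmul]
          exact Finset.sum_congr rfl fun a _ => (TensorProduct.smul_tmul' _ _ _).symm
      _ = -((Γ2 b * Γ1 m) ⊗ₜ[ℂ] (x2 b * x1 m)) := by
          rw [eq_neg_of_add_eq_zero_left (hcl b m), TensorProduct.neg_tmul, neg_neg]
  rw [sq, add_mul, mul_add, mul_add,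
    Finset.sum_mul_sum, Finset.sum_mul_sum, Finset.sum_mul_sum, Finset.sum_mul_sum]
  simp only [Algebra.TensorProduct.tmul_mul_tmul]
  rw [hA, hB, hX, TensorProduct.tmul_add]
  abel
end

section
/- Let n̂ ∈ ℝ³ be a unit vector, u ∈ ℝ, and v, w ∈ ℝ³ with ‖v‖²‖w‖² + u² = 1. Set A = J^+_{n̂} J^-_v, B = J^-_{n̂} J^+_w, C = u J^+_{n̂}, D = J^-_{n̂}. Then A and B are symmetric, C and D are antisymmetric, [A,C] = 0 = [B,D], and A²⊗B² + C²⊗D² = 1⊗1 (i.e., (A²)^λ_μ(B²)^α_β + (C²)^λ_μ(D²)^α_β = δ^λ_μ δ^α_β). -/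
open Matrix
private lemma s0' : (Fin.succ 0 : Fin 4) = 1 := rfl
private lemma s1' : (Fin.succ 1 : Fin 4) = 2 := rfl
private lemma s2' : (Fin.succ 2 : Fin 4) = 3 := rfl

def Mx (s : ℝ) (n : Fin 3 → ℝ) : Matrix (Fin 4) (Fin 4) ℝ :=
  !![0, s*n 0, s*n 1, s*n 2;
     -(s*n 0), 0, n 2, -n 1;
     -(s*n 1), -n 2, 0, n 0;
     -(s*n 2), n 1, -n 0, 0]

lemma Jsum (s : ℝ) (n : Fin 3 → ℝ) : (∑ a : Fin 3, n a • Jmat s a) = Mx s n := by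
  ext i j
  fin_cases i <;> fin_cases j <;>
    simp [Mx, Jmat, eps, Fin.sum_univ_three, s0', s1', s2'] <;> ring

lemma Mx_transpose (s : ℝ) (n : Fin 3 → ℝ) : (Mx s n)ᵀ = -Mx s n := by
  ext i j
  fin_cases i <;> fin_cases j <;> simp [Mx]

lemma Mx_comm (n v : Fin 3 → ℝ) : Mx (-1) n * Mx 1 v = Mx 1 v * Mx (-1) n := by
  ext i j
  fin_cases i <;> fin_cases j <;>
    simp [Mx, Matrix.mul_apply, Fin.sum_univ_four] <;> ring

lemma Mx_sq (s : ℝ) (hs : s = 1 ∨ s = -1) (n : Fin 3 → ℝ) :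
    Mx s n * Mx s n = (-(n 0 ^ 2 + n 1 ^ 2 + n 2 ^ 2)) • 1 := by
  rcases hs with h | h <;> subst h <;> ext i j <;>
    fin_cases i <;> fin_cases j <;>
    simp [Mx, Matrix.mul_apply, Fin.sum_univ_four, Matrix.one_apply] <;> ring

lemma prod_sq (n v : Fin 3 → ℝ) (s t : ℝ) (hs : s = 1 ∨ s = -1) (ht : t = 1 ∨ t = -1)
    (hst : Mx s n * Mx t v = Mx t v * Mx s n) :
    (Mx s n * Mx t v) * (Mx s n * Mx t v)
      = ((n 0 ^ 2 + n 1 ^ 2 + n 2 ^ 2) * (v 0 ^ 2 + v 1 ^ 2 + v 2 ^ 2)) • 1 := by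
  calc (Mx s n * Mx t v) * (Mx s n * Mx t v)
      = Mx s n * (Mx t v * Mx s n) * Mx t v := by noncomm_ring
    _ = (Mx s n * Mx s n) * (Mx t v * Mx t v) := by rw [← hst]; noncomm_ring
    _ = _ := by
        rw [Mx_sq s hs, Mx_sq t ht, smul_mul_assoc, mul_smul_comm, smul_smul, one_mul]
        congr 1; ring


/-- Stratum I: with `A = J⁺_n̂ J⁻_v`, `B = J⁻_n̂ J⁺_w`, `C = u J⁺_n̂`, `D = J⁻_n̂`, where
`n̂` is a unit vector and `‖v‖²‖w‖² + u² = 1`, one has that `A,B` are symmetric, `C,D`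
antisymmetric, `[A,C] = 0 = [B,D]`, and `A²⊗B² + C²⊗D² = 1⊗1`. -/
theorem stmt16 (n v w : Fin 3 → ℝ) (u : ℝ)
    (hn : ∑ a : Fin 3, n a ^ 2 = 1)
    (hc : (∑ a : Fin 3, v a ^ 2) * (∑ a : Fin 3, w a ^ 2) + u ^ 2 = 1)
    (A B C D : Matrix (Fin 4) (Fin 4) ℝ)
    (hA : A = (∑ a : Fin 3, n a • Jmat (-1) a) * (∑ a : Fin 3, v a • Jmat 1 a))
    (hB : B = (∑ a : Fin 3, n a • Jmat 1 a) * (∑ a : Fin 3, w a • Jmat (-1) a))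
    (hC : C = u • (∑ a : Fin 3, n a • Jmat (-1) a))
    (hD : D = ∑ a : Fin 3, n a • Jmat 1 a) :
    Aᵀ = A ∧ Bᵀ = B ∧ Cᵀ = -C ∧ Dᵀ = -D ∧
    A * C = C * A ∧ B * D = D * B ∧
    (∀ (l m a b : Fin 4),
      (A * A) l m * (B * B) a b + (C * C) l m * (D * D) a b =
        (if l = m then (1 : ℝ) else 0) * (if a = b then 1 else 0)) := by
  rw [Jsum, Jsum] at hA
  rw [Jsum, Jsum] at hB
  rw [Jsum] at hC
  rw [Jsum] at hD
  subst hA hB hC hD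
  have hn' : n 0 ^ 2 + n 1 ^ 2 + n 2 ^ 2 = 1 := by simpa [Fin.sum_univ_three] using hn
  have hc' : (v 0 ^ 2 + v 1 ^ 2 + v 2 ^ 2) * (w 0 ^ 2 + w 1 ^ 2 + w 2 ^ 2) + u ^ 2 = 1 := by
    simpa [Fin.sum_univ_three] using hc
  have hcomA : Mx (-1) n * Mx 1 v = Mx 1 v * Mx (-1) n := Mx_comm n v
  have hcomB : Mx 1 n * Mx (-1) w = Mx (-1) w * Mx 1 n := (Mx_comm w n).symm
  refine ⟨?_, ?_, ?_, ?_, ?_, ?_, ?_⟩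
  · rw [transpose_mul, Mx_transpose, Mx_transpose, neg_mul_neg, ← hcomA]
  · rw [transpose_mul, Mx_transpose, Mx_transpose, neg_mul_neg, ← hcomB]
  · rw [transpose_smul, Mx_transpose, smul_neg]
  · rw [Mx_transpose]
  · rw [mul_smul_comm, smul_mul_assoc, mul_assoc, ← hcomA, ← mul_assoc]
  · rw [mul_assoc, ← hcomB, ← mul_assoc]
  · have hAA : (Mx (-1) n * Mx 1 v) * (Mx (-1) n * Mx 1 v)
        = (v 0 ^ 2 + v 1 ^ 2 + v 2 ^ 2) • (1 : Matrix (Fin 4) (Fin 4) ℝ) := by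
      rw [prod_sq n v (-1) 1 (Or.inr rfl) (Or.inl rfl) hcomA, hn', one_mul]
    have hBB : (Mx 1 n * Mx (-1) w) * (Mx 1 n * Mx (-1) w)
        = (w 0 ^ 2 + w 1 ^ 2 + w 2 ^ 2) • (1 : Matrix (Fin 4) (Fin 4) ℝ) := by
      rw [prod_sq n w 1 (-1) (Or.inl rfl) (Or.inr rfl) hcomB, hn', one_mul]
    have hCC : (u • Mx (-1) n) * (u • Mx (-1) n)
        = (-(u ^ 2)) • (1 : Matrix (Fin 4) (Fin 4) ℝ) := by
      rw [smul_mul_assoc, mul_smul_comm, smul_smul, Mx_sq (-1) (Or.inr rfl) n, hn',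
        smul_smul]
      congr 1; ring
    have hDD : Mx 1 n * Mx 1 n = (-1 : ℝ) • (1 : Matrix (Fin 4) (Fin 4) ℝ) := by
      rw [Mx_sq 1 (Or.inl rfl) n, hn']
    intro l m a b
    rw [hAA, hBB, hCC, hDD]
    simp only [Matrix.smul_apply, Matrix.one_apply, smul_eq_mul]
    split_ifs <;> first | linear_combination hc' | ring
end

section
/- In the *-algebra 𝒜(ℝ⁸_u) generated by hermitian elements x₁^λ, x₂^α (λ,α ∈ {0,1,2,3}) with relations x₁^λ x₁^μ = x₁^μ x₁^λ, x₂^α x₂^β = x₂^β x₂^α, and x₁^λ x₂^α = u⁰ x₂^α x₁^λ + i Σ_{β,ρ} (J^+_ū)^α_β (J^+_{n̂₁})^λ_ρ x₂^β x₁^ρ (with (u⁰)² + ‖ū‖² = 1, ū ⊥-decomposed along orthonormal n̂₁, n̂₂), the relations are invariant under the SU(2)×SU(2) action x₁^λ ↦ Σ_ν (J^-_{q₁})^λ_ν x₁^ν, x₂^α ↦ Σ_β (J^-_{q₂})^α_β x₂^β for any unit quaternions q₁, q₂. That is, the transformed generators satisfy the same relations with the same R-matrix. -/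
open Matrix Quaternion

/-- The basis `1, e₁, e₂, e₃` of the quaternions ℍ ≅ ℝ⁴. -/
noncomputable def quatBasis : Module.Basis (Fin 4) ℝ ℍ[ℝ] :=
  QuaternionAlgebra.basisOneIJK (-1 : ℝ) 0 (-1)

/-- `J⁺_q`: the matrix of left multiplication by `q` on ℍ ≅ ℝ⁴. -/
noncomputable def JplusQ (q : ℍ[ℝ]) : Matrix (Fin 4) (Fin 4) ℝ :=
  LinearMap.toMatrix quatBasis quatBasis (LinearMap.mulLeft ℝ q)

/-- `J⁻_q`: the matrix of right multiplication by `q̄` on ℍ ≅ ℝ⁴. -/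
noncomputable def JminusQ (q : ℍ[ℝ]) : Matrix (Fin 4) (Fin 4) ℝ :=
  LinearMap.toMatrix quatBasis quatBasis (LinearMap.mulRight ℝ (star q))

lemma Jcomm (p q : ℍ[ℝ]) : JminusQ q * JplusQ p = JplusQ p * JminusQ q := by
  unfold JminusQ JplusQ
  rw [← LinearMap.toMatrix_comp quatBasis quatBasis quatBasis,
      ← LinearMap.toMatrix_comp quatBasis quatBasis quatBasis]
  congr 1
  refine LinearMap.ext fun x => ?_
  simp only [LinearMap.comp_apply, LinearMap.mulLeft_apply, LinearMap.mulRight_apply, mul_assoc]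

lemma swap4 {M : Type*} [AddCommMonoid M] (f : Fin 4 → Fin 4 → Fin 4 → Fin 4 → M) :
    (∑ n : Fin 4, ∑ b : Fin 4, ∑ c : Fin 4, ∑ s : Fin 4, f n b c s)
    = ∑ c : Fin 4, ∑ s : Fin 4, ∑ n : Fin 4, ∑ b : Fin 4, f n b c s := by
  calc (∑ n : Fin 4, ∑ b : Fin 4, ∑ c : Fin 4, ∑ s : Fin 4, f n b c s)
      = ∑ n : Fin 4, ∑ c : Fin 4, ∑ b : Fin 4, ∑ s : Fin 4, f n b c s :=
        Finset.sum_congr rfl fun n _ => Finset.sum_comm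
    _ = ∑ c : Fin 4, ∑ n : Fin 4, ∑ b : Fin 4, ∑ s : Fin 4, f n b c s := Finset.sum_comm
    _ = ∑ c : Fin 4, ∑ n : Fin 4, ∑ s : Fin 4, ∑ b : Fin 4, f n b c s :=
        Finset.sum_congr rfl fun c _ => Finset.sum_congr rfl fun n _ => Finset.sum_comm
    _ = ∑ c : Fin 4, ∑ s : Fin 4, ∑ n : Fin 4, ∑ b : Fin 4, f n b c s :=
        Finset.sum_congr rfl fun c _ => Finset.sum_comm

lemma mulSums {A : Type*} [Ring A] [Algebra ℂ A] (c d : Fin 4 → ℂ) (x y : Fin 4 → A) :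
    (∑ n : Fin 4, c n • x n) * (∑ b : Fin 4, d b • y b)
    = ∑ n : Fin 4, ∑ b : Fin 4, (c n * d b) • (x n * y b) := by
  rw [Finset.sum_mul]
  refine Finset.sum_congr rfl fun n _ => ?_
  rw [Finset.mul_sum]
  refine Finset.sum_congr rfl fun b _ => ?_
  rw [smul_mul_assoc, mul_smul_comm, smul_smul]

lemma delta1 (h : Fin 4 → ℂ) (j : Fin 4) :
    (∑ i : Fin 4, h i * if i = j then (1 : ℂ) else 0) = h j := by simp

lemma delta2 (h : Fin 4 → ℂ) (j : Fin 4) :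
    (∑ i : Fin 4, h i * if j = i then (1 : ℂ) else 0) = h j := by simp

/-- The relations of `𝒜(ℝ⁸_u)` are invariant under the `SU(2) × SU(2)` action
`x₁ ↦ J⁻_{q₁} x₁`, `x₂ ↦ J⁻_{q₂} x₂` by unit quaternions `q₁, q₂`: the transformed
generators satisfy the same relations with the same R-matrix. -/
theorem stmt18 {A : Type*} [Ring A] [Algebra ℂ A]
    (n1 n2 : ℍ[ℝ]) (hn1re : n1.re = 0) (hn2re : n2.re = 0)
    (hn1 : n1 * star n1 = 1) (hn2 : n2 * star n2 = 1)
    (hortho : (n1 * star n2).re = 0)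
    (u0 u1 u2 : ℝ) (hu : u0 ^ 2 + u1 ^ 2 + u2 ^ 2 = 1)
    (ubar : ℍ[ℝ]) (hubar : ubar = u1 • n1 + u2 • n2)
    (R : Fin 4 → Fin 4 → Fin 4 → Fin 4 → ℂ)
    (hR : ∀ l a b r, R l a b r =
      (u0 : ℂ) * ((if l = r then (1 : ℂ) else 0) * (if a = b then 1 else 0)) +
      Complex.I * ((JplusQ n1 l r : ℝ) * (JplusQ ubar a b : ℝ) : ℝ))
    (x1 x2 : Fin 4 → A)
    (hc1 : ∀ l m, x1 l * x1 m = x1 m * x1 l)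
    (hc2 : ∀ a b, x2 a * x2 b = x2 b * x2 a)
    (hrel : ∀ l a, x1 l * x2 a = ∑ b : Fin 4, ∑ r : Fin 4, R l a b r • (x2 b * x1 r))
    (q1 q2 : ℍ[ℝ]) (hq1 : q1 * star q1 = 1) (hq2 : q2 * star q2 = 1)
    (y1 y2 : Fin 4 → A)
    (hy1 : y1 = fun l => ∑ n : Fin 4, ((JminusQ q1 l n : ℝ) : ℂ) • x1 n)
    (hy2 : y2 = fun a => ∑ b : Fin 4, ((JminusQ q2 a b : ℝ) : ℂ) • x2 b) :
    (∀ l m, y1 l * y1 m = y1 m * y1 l) ∧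
    (∀ a b, y2 a * y2 b = y2 b * y2 a) ∧
    (∀ l a, y1 l * y2 a = ∑ b : Fin 4, ∑ r : Fin 4, R l a b r • (y2 b * y1 r)) := by
  subst hy1 hy2
  have hAC' : ∀ l s : Fin 4,
      (∑ n : Fin 4, ((JminusQ q1 l n : ℝ) : ℂ) * ((JplusQ n1 n s : ℝ) : ℂ))
      = ∑ r : Fin 4, ((JplusQ n1 l r : ℝ) : ℂ) * ((JminusQ q1 r s : ℝ) : ℂ) := by
    intro l s
    have h := congrFun (congrFun (Jcomm n1 q1) l) s
    simp only [Matrix.mul_apply] at h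
    exact_mod_cast h
  have hBD' : ∀ a c : Fin 4,
      (∑ b : Fin 4, ((JminusQ q2 a b : ℝ) : ℂ) * ((JplusQ ubar b c : ℝ) : ℂ))
      = ∑ b : Fin 4, ((JplusQ ubar a b : ℝ) : ℂ) * ((JminusQ q2 b c : ℝ) : ℂ) := by
    intro a c
    have h := congrFun (congrFun (Jcomm ubar q2) a) c
    simp only [Matrix.mul_apply] at h
    exact_mod_cast h
  refine ⟨?_, ?_, ?_⟩
  · intro l m
    rw [mulSums, mulSums, Finset.sum_comm]
    exact Finset.sum_congr rfl fun n _ => Finset.sum_congr rfl fun p _ => by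
      rw [hc1, mul_comm]
  · intro a b
    rw [mulSums, mulSums, Finset.sum_comm]
    exact Finset.sum_congr rfl fun n _ => Finset.sum_congr rfl fun p _ => by
      rw [hc2, mul_comm]
  · intro l a
    have key : ∀ c s : Fin 4,
        (∑ n : Fin 4, ∑ b : Fin 4,
          (((JminusQ q1 l n : ℝ) : ℂ) * ((JminusQ q2 a b : ℝ) : ℂ)) * R n b c s)
        = ∑ b : Fin 4, ∑ r : Fin 4,
          R l a b r * (((JminusQ q2 b c : ℝ) : ℂ) * ((JminusQ q1 r s : ℝ) : ℂ)) := by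
      intro c s
      simp only [hR]
      simp only [mul_add, add_mul, Finset.sum_add_distrib]
      congr 1
      · -- delta part
        calc (∑ n : Fin 4, ∑ b : Fin 4,
                (((JminusQ q1 l n : ℝ) : ℂ) * ((JminusQ q2 a b : ℝ) : ℂ)) *
                  ((u0 : ℂ) * ((if n = s then (1 : ℂ) else 0) * (if b = c then 1 else 0))))
            = ∑ n : Fin 4, ∑ b : Fin 4,
                (((u0 : ℂ) * ((JminusQ q1 l n : ℝ) : ℂ) * (if n = s then (1 : ℂ) else 0)) *
                  ((JminusQ q2 a b : ℝ) : ℂ)) * (if b = c then (1 : ℂ) else 0) :=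
              Finset.sum_congr rfl fun n _ => Finset.sum_congr rfl fun b _ => by ring
          _ = ∑ n : Fin 4,
                ((u0 : ℂ) * ((JminusQ q1 l n : ℝ) : ℂ) * (if n = s then (1 : ℂ) else 0)) *
                  ((JminusQ q2 a c : ℝ) : ℂ) :=
              Finset.sum_congr rfl fun n _ => delta1 _ c
          _ = ∑ n : Fin 4,
                ((u0 : ℂ) * ((JminusQ q2 a c : ℝ) : ℂ) * ((JminusQ q1 l n : ℝ) : ℂ)) *
                  (if n = s then (1 : ℂ) else 0) :=
              Finset.sum_congr rfl fun n _ => by ring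
          _ = (u0 : ℂ) * ((JminusQ q2 a c : ℝ) : ℂ) * ((JminusQ q1 l s : ℝ) : ℂ) := delta1 _ s
          _ = ∑ b : Fin 4,
                ((u0 : ℂ) * ((JminusQ q2 b c : ℝ) : ℂ) * ((JminusQ q1 l s : ℝ) : ℂ)) *
                  (if a = b then (1 : ℂ) else 0) :=
              (delta2 (fun b => (u0 : ℂ) * ((JminusQ q2 b c : ℝ) : ℂ) *
                ((JminusQ q1 l s : ℝ) : ℂ)) a).symm
          _ = ∑ b : Fin 4, ∑ r : Fin 4,
                (((u0 : ℂ) * (if a = b then (1 : ℂ) else 0) * ((JminusQ q2 b c : ℝ) : ℂ) *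
                  ((JminusQ q1 r s : ℝ) : ℂ)) * (if l = r then (1 : ℂ) else 0)) :=
              Finset.sum_congr rfl fun b _ => by
                rw [delta2 (fun r => (u0 : ℂ) * (if a = b then (1 : ℂ) else 0) *
                  ((JminusQ q2 b c : ℝ) : ℂ) * ((JminusQ q1 r s : ℝ) : ℂ)) l]
                ring
          _ = ∑ b : Fin 4, ∑ r : Fin 4,
                ((u0 : ℂ) * ((if l = r then (1 : ℂ) else 0) * (if a = b then 1 else 0))) *
                  (((JminusQ q2 b c : ℝ) : ℂ) * ((JminusQ q1 r s : ℝ) : ℂ)) :=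
              Finset.sum_congr rfl fun b _ => Finset.sum_congr rfl fun r _ => by ring
      · -- I part
        calc (∑ n : Fin 4, ∑ b : Fin 4,
                (((JminusQ q1 l n : ℝ) : ℂ) * ((JminusQ q2 a b : ℝ) : ℂ)) *
                  (Complex.I * (((JplusQ n1 n s : ℝ) * (JplusQ ubar b c : ℝ) : ℝ) : ℂ)))
            = Complex.I * ((∑ n : Fin 4, ((JminusQ q1 l n : ℝ) : ℂ) * ((JplusQ n1 n s : ℝ) : ℂ))
                * (∑ b : Fin 4, ((JminusQ q2 a b : ℝ) : ℂ) * ((JplusQ ubar b c : ℝ) : ℂ))) := by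
              rw [Finset.sum_mul_sum]
              simp only [Finset.mul_sum]
              exact Finset.sum_congr rfl fun n _ => Finset.sum_congr rfl fun b _ => by
                push_cast; ring
          _ = Complex.I * ((∑ r : Fin 4, ((JplusQ n1 l r : ℝ) : ℂ) * ((JminusQ q1 r s : ℝ) : ℂ))
                * (∑ b : Fin 4, ((JplusQ ubar a b : ℝ) : ℂ) * ((JminusQ q2 b c : ℝ) : ℂ))) := by
              rw [hAC' l s, hBD' a c]
          _ = ∑ b : Fin 4, ∑ r : Fin 4,
                Complex.I * (((JplusQ n1 l r : ℝ) * (JplusQ ubar a b : ℝ) : ℝ) : ℂ) *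
                  (((JminusQ q2 b c : ℝ) : ℂ) * ((JminusQ q1 r s : ℝ) : ℂ)) := by
              rw [Finset.sum_mul_sum]
              simp only [Finset.mul_sum]
              rw [Finset.sum_comm]
              exact Finset.sum_congr rfl fun b _ => Finset.sum_congr rfl fun r _ => by
                push_cast; ring
    rw [mulSums]
    calc (∑ n : Fin 4, ∑ b : Fin 4,
            (((JminusQ q1 l n : ℝ) : ℂ) * ((JminusQ q2 a b : ℝ) : ℂ)) • (x1 n * x2 b))
        = ∑ n : Fin 4, ∑ b : Fin 4, ∑ c : Fin 4, ∑ s : Fin 4,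
            ((((JminusQ q1 l n : ℝ) : ℂ) * ((JminusQ q2 a b : ℝ) : ℂ)) * R n b c s) •
              (x2 c * x1 s) := by
          refine Finset.sum_congr rfl fun n _ => Finset.sum_congr rfl fun b _ => ?_
          rw [hrel n b, Finset.smul_sum]
          refine Finset.sum_congr rfl fun c _ => ?_
          rw [Finset.smul_sum]
          exact Finset.sum_congr rfl fun s _ => (smul_smul _ _ _)
      _ = ∑ c : Fin 4, ∑ s : Fin 4,
            (∑ n : Fin 4, ∑ b : Fin 4,
              (((JminusQ q1 l n : ℝ) : ℂ) * ((JminusQ q2 a b : ℝ) : ℂ)) * R n b c s) •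
              (x2 c * x1 s) := by
          rw [swap4 (fun n b c s =>
            ((((JminusQ q1 l n : ℝ) : ℂ) * ((JminusQ q2 a b : ℝ) : ℂ)) * R n b c s) •
              (x2 c * x1 s))]
          refine Finset.sum_congr rfl fun c _ => Finset.sum_congr rfl fun s _ => ?_
          rw [Finset.sum_smul]
          exact Finset.sum_congr rfl fun n _ => (Finset.sum_smul).symm
      _ = ∑ c : Fin 4, ∑ s : Fin 4,
            (∑ b : Fin 4, ∑ r : Fin 4,
              R l a b r * (((JminusQ q2 b c : ℝ) : ℂ) * ((JminusQ q1 r s : ℝ) : ℂ))) •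
              (x2 c * x1 s) :=
          Finset.sum_congr rfl fun c _ => Finset.sum_congr rfl fun s _ => by rw [key c s]
      _ = ∑ b : Fin 4, ∑ r : Fin 4, ∑ c : Fin 4, ∑ s : Fin 4,
            (R l a b r * (((JminusQ q2 b c : ℝ) : ℂ) * ((JminusQ q1 r s : ℝ) : ℂ))) •
              (x2 c * x1 s) := by
          rw [swap4 (fun b r c s =>
            (R l a b r * (((JminusQ q2 b c : ℝ) : ℂ) * ((JminusQ q1 r s : ℝ) : ℂ))) •
              (x2 c * x1 s))]
          refine Finset.sum_congr rfl fun c _ => Finset.sum_congr rfl fun s _ => ?_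
          rw [Finset.sum_smul]
          exact Finset.sum_congr rfl fun b _ => Finset.sum_smul
      _ = ∑ b : Fin 4, ∑ r : Fin 4, R l a b r •
            ((∑ c : Fin 4, ((JminusQ q2 b c : ℝ) : ℂ) • x2 c) *
              (∑ s : Fin 4, ((JminusQ q1 r s : ℝ) : ℂ) • x1 s)) := by
          refine Finset.sum_congr rfl fun b _ => Finset.sum_congr rfl fun r _ => ?_
          rw [mulSums, Finset.smul_sum]
          refine Finset.sum_congr rfl fun c _ => ?_
          rw [Finset.smul_sum]
          exact Finset.sum_congr rfl fun s _ => (smul_smul _ _ _).symm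
end
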